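/- arXiv:1502.06783 — 5 statements merged into one kernel-verified Lean document; each statement's English description precedes it below -/
import Mathlib

section
/- Let d ∈ ℕ, d ≥ 1, and let F be a family of configurations over ℝ^d. Then every sequence in F admits a subsequence converging vaguely to some configuration over ℝ^d (i.e. F is relatively compact in the vague topology on the configuration space) if and only if for every n ∈ ℕ one has sup_{γ ∈ F} ( |γ ∩ B_n(0)| + δ⁻¹(γ, B_n(0)) ) < ∞. -/
open Filter Topology Metric Set

noncomputable section

/-- A configuration over `ℝ^d`: a locally finite subset. -/
def IsConfiguration {d : ℕ} (γ : Set (EuclideanSpace ℝ (Fin d))) : Prop :=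
  ∀ K : Set (EuclideanSpace ℝ (Fin d)), IsCompact K → (γ ∩ K).Finite

/-- Vague convergence of a sequence of configurations: convergence of pairings with
continuous compactly supported test functions. -/
def VagueTendsto {d : ℕ} (γ : ℕ → Set (EuclideanSpace ℝ (Fin d)))
    (γ' : Set (EuclideanSpace ℝ (Fin d))) : Prop :=
  ∀ f : EuclideanSpace ℝ (Fin d) → ℝ, Continuous f → HasCompactSupport f →
    Tendsto (fun k => ∑ᶠ x ∈ γ k, f x) atTop (𝓝 (∑ᶠ x ∈ γ', f x))

/-- `δ⁻¹(γ, B)`: the reciprocal of the minimal distance between distinct points of `γ ∩ B`,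
interpreted as `0` (= `sSup ∅` in `ℝ`) when `γ ∩ B` has fewer than two points. -/
def deltaInv {d : ℕ} (γ B : Set (EuclideanSpace ℝ (Fin d))) : ℝ :=
  sSup {r | ∃ x ∈ γ ∩ B, ∃ y ∈ γ ∩ B, x ≠ y ∧ r = 1 / dist x y}

section enum
variable {α : Type*}

noncomputable def enumOf (s : Set α) (hs : s.Finite) (N : ℕ) (pad : Fin N → α) : Fin N → α :=
  fun i => if h : (i : ℕ) < hs.toFinset.card then
    ((hs.toFinset.equivFin.symm ⟨(i : ℕ), h⟩ : hs.toFinset) : α) else pad i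

lemma enumOf_real {s : Set α} (hs : s.Finite) {N : ℕ} (pad : Fin N → α) {i : Fin N}
    (h : (i : ℕ) < hs.toFinset.card) : enumOf s hs N pad i ∈ s := by
  simp only [enumOf]; rw [dif_pos h]
  have := (hs.toFinset.equivFin.symm ⟨(i : ℕ), h⟩).2
  rwa [Set.Finite.mem_toFinset] at this

lemma enumOf_pad {s : Set α} (hs : s.Finite) {N : ℕ} (pad : Fin N → α) {i : Fin N}
    (h : ¬ ((i : ℕ) < hs.toFinset.card)) : enumOf s hs N pad i = pad i := dif_neg h

lemma enumOf_mem_or {s : Set α} (hs : s.Finite) {N : ℕ} (pad : Fin N → α) (i : Fin N) :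
    enumOf s hs N pad i ∈ s ∨ enumOf s hs N pad i = pad i := by
  by_cases h : (i : ℕ) < hs.toFinset.card
  · exact Or.inl (enumOf_real hs pad h)
  · exact Or.inr (enumOf_pad hs pad h)

lemma enumOf_inj {s : Set α} (hs : s.Finite) {N : ℕ} (pad : Fin N → α)
    (hpad_inj : Function.Injective pad) (hpad_not : ∀ i, pad i ∉ s) :
    Function.Injective (enumOf s hs N pad) := by
  intro i j hij
  by_cases hi : (i : ℕ) < hs.toFinset.card <;> by_cases hj : (j : ℕ) < hs.toFinset.card
  · simp only [enumOf] at hij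
    rw [dif_pos hi, dif_pos hj] at hij
    have := hs.toFinset.equivFin.symm.injective (Subtype.coe_injective hij)
    exact Fin.ext (by simpa [Fin.ext_iff] using this)
  · exact absurd (enumOf_pad hs pad hj ▸ hij ▸ enumOf_real hs pad hi) (fun h => hpad_not j h)
  · exact absurd (enumOf_pad hs pad hi ▸ hij.symm ▸ enumOf_real hs pad hj)
      (fun h => hpad_not i h)
  · rw [enumOf_pad hs pad hi, enumOf_pad hs pad hj] at hij
    exact hpad_inj hij

lemma enumOf_surj {s : Set α} (hs : s.Finite) {N : ℕ} (pad : Fin N → α)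
    (hN : hs.toFinset.card ≤ N) {x : α} (hx : x ∈ s) :
    ∃ i : Fin N, (i : ℕ) < hs.toFinset.card ∧ enumOf s hs N pad i = x := by
  set j := hs.toFinset.equivFin ⟨x, hs.mem_toFinset.2 hx⟩ with hj
  refine ⟨⟨(j : ℕ), lt_of_lt_of_le j.2 hN⟩, j.2, ?_⟩
  simp only [enumOf]
  rw [dif_pos (show ((⟨(j : ℕ), lt_of_lt_of_le j.2 hN⟩ : Fin N) : ℕ) < hs.toFinset.card from j.2)]
  have : (⟨((⟨(j : ℕ), lt_of_lt_of_le j.2 hN⟩ : Fin N) : ℕ), j.2⟩ : Fin hs.toFinset.card) = j := by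
    ext; simp
  rw [this, hj, hs.toFinset.equivFin.symm_apply_apply]
end enum

variable {d : ℕ}
local notation "E" => EuclideanSpace ℝ (Fin d)

lemma finsum_mem_eq_sum_ts (γ : Set E) (f : E → ℝ) (h : (γ ∩ tsupport f).Finite) :
    ∑ᶠ x ∈ γ, f x = ∑ x ∈ h.toFinset, f x :=
  finsum_mem_eq_sum_of_subset _
    (fun x hx => h.mem_toFinset.2 ⟨hx.1, subset_tsupport f hx.2⟩)
    (fun x hx => (h.mem_toFinset.1 hx).1)

lemma deltaInv_set_finite {γ B : Set E} (h : (γ ∩ B).Finite) :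
    {r | ∃ x ∈ γ ∩ B, ∃ y ∈ γ ∩ B, x ≠ y ∧ r = 1 / dist x y}.Finite := by
  apply Set.Finite.subset ((h.prod h).image (fun p : E × E => 1 / dist p.1 p.2))
  rintro r ⟨x, hx, y, hy, _, rfl⟩
  exact ⟨(x, y), ⟨hx, hy⟩, rfl⟩

lemma deltaInv_nonneg (γ B : Set E) : 0 ≤ deltaInv γ B := by
  apply Real.sSup_nonneg
  rintro r ⟨x, _, y, _, hxy, rfl⟩
  positivity

lemma le_deltaInv {γ B : Set E} (h : (γ ∩ B).Finite) {x y : E} (hx : x ∈ γ ∩ B)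
    (hy : y ∈ γ ∩ B) (hxy : x ≠ y) : 1 / dist x y ≤ deltaInv γ B :=
  le_csSup (deltaInv_set_finite h).bddAbove ⟨x, hx, y, hy, hxy, rfl⟩

lemma backward (hd : 1 ≤ d) (F : Set (Set E)) (hF : ∀ γ ∈ F, IsConfiguration γ)
    (hbd : ∀ n : ℕ, ∃ C : ℝ, ∀ γ ∈ F,
      ((γ ∩ closedBall (0 : E) n).ncard : ℝ) + deltaInv γ (closedBall (0 : E) n) ≤ C)
    (u : ℕ → Set E) (hu : ∀ k, u k ∈ F) :
    ∃ φ : ℕ → ℕ, StrictMono φ ∧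
      ∃ γ' : Set E, IsConfiguration γ' ∧ VagueTendsto (u ∘ φ) γ' := by
  classical
  choose C hC using hbd
  have hfin : ∀ (n k : ℕ), (u k ∩ closedBall (0:E) n).Finite :=
    fun n k => hF _ (hu k) _ (isCompact_closedBall _ _)
  set N : ℕ → ℕ := fun n => ⌈C n⌉₊ with hN
  have hcount : ∀ n k : ℕ, (hfin n k).toFinset.card ≤ N n := by
    intro n k
    have h1 := hC n _ (hu k)
    have h2 := deltaInv_nonneg (u k) (closedBall (0:E) n)
    have h3 : ((u k ∩ closedBall (0:E) n).ncard : ℝ) ≤ C n := by linarith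
    rw [Set.ncard_eq_toFinset_card _ (hfin n k)] at h3
    have h4 : ((hfin n k).toFinset.card : ℝ) ≤ (N n : ℝ) := h3.trans (Nat.le_ceil _)
    exact_mod_cast h4
  set ε : ℕ → ℝ := fun n => 1 / max (C n) 1 with hε
  have hεpos : ∀ n, 0 < ε n := fun n =>
    div_pos one_pos (lt_of_lt_of_le one_pos (le_max_right _ _))
  have hsep : ∀ n k : ℕ, ∀ x ∈ u k ∩ closedBall (0:E) n, ∀ y ∈ u k ∩ closedBall (0:E) n,
      x ≠ y → ε n ≤ dist x y := by
    intro n k x hx y hy hxy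
    have h1 : 1 / dist x y ≤ deltaInv (u k) (closedBall (0:E) n) :=
      le_deltaInv (hfin n k) hx hy hxy
    have h2 : deltaInv (u k) (closedBall (0:E) n) ≤ max (C n) 1 := by
      have h3 := hC n _ (hu k)
      have h4 : (0:ℝ) ≤ ((u k ∩ closedBall (0:E) n).ncard : ℝ) := Nat.cast_nonneg _
      exact le_trans (by linarith) (le_max_left _ _)
    have hdpos : 0 < dist x y := dist_pos.2 hxy
    have hmax : (0:ℝ) < max (C n) 1 := lt_of_lt_of_le one_pos (le_max_right _ _)
    have h5 : 1 / dist x y ≤ max (C n) 1 := le_trans h1 h2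
    rw [div_le_iff₀ hdpos] at h5
    show 1 / max (C n) 1 ≤ dist x y
    rw [div_le_iff₀ hmax]
    linarith [mul_comm (max (C n) 1) (dist x y)]
  -- padding points
  set q : (n : ℕ) → Fin (N n) → E := fun n i =>
    EuclideanSpace.single (⟨0, hd⟩ : Fin d) ((n : ℝ) + 1 + (i : ℝ) / ((N n : ℝ) + 1)) with hq
  have hqnorm : ∀ (n : ℕ) (i : Fin (N n)), ‖q n i‖ = (n:ℝ) + 1 + (i:ℝ)/((N n : ℝ)+1) := by
    intro n i
    rw [hq]
    rw [EuclideanSpace.norm_single, Real.norm_eq_abs, abs_of_nonneg (by positivity)]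
  have hqnorm_lb : ∀ (n : ℕ) (i : Fin (N n)), (n:ℝ) + 1 ≤ ‖q n i‖ := by
    intro n i
    rw [hqnorm]
    have : (0:ℝ) ≤ (i:ℝ)/((N n : ℝ)+1) := by positivity
    linarith
  have hqnorm_ub : ∀ (n : ℕ) (i : Fin (N n)), ‖q n i‖ ≤ (n:ℝ) + 2 := by
    intro n i
    rw [hqnorm]
    have h1 : (i:ℝ)/((N n : ℝ)+1) ≤ 1 := by
      rw [div_le_one (by positivity)]
      have : (i:ℝ) ≤ (N n : ℝ) := by exact_mod_cast (i.2.le)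
      linarith
    linarith
  have hq_inj : ∀ n : ℕ, Function.Injective (q n) := by
    intro n i j hij
    have h1 := congrArg (fun v : E => ‖v‖) hij
    rw [hqnorm, hqnorm] at h1
    have h2 : (i:ℝ)/((N n : ℝ)+1) = (j:ℝ)/((N n : ℝ)+1) := by linarith
    field_simp at h2
    exact Fin.ext (by exact_mod_cast h2)
  have hq_not : ∀ (n k : ℕ) (i : Fin (N n)), q n i ∉ u k ∩ closedBall (0:E) n := by
    intro n k i h
    have h1 : ‖q n i‖ ≤ (n:ℝ) := mem_closedBall_zero_iff.1 h.2
    linarith [hqnorm_lb n i]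
  -- tuples in the compact product space
  have he_ball : ∀ (n k : ℕ) (i : Fin (N n)),
      enumOf _ (hfin n k) (N n) (q n) i ∈ closedBall (0:E) ((n:ℝ)+2) := by
    intro n k i
    rcases enumOf_mem_or (hfin n k) (q n) i with h | h
    · rw [mem_closedBall_zero_iff]
      have := mem_closedBall_zero_iff.1 h.2
      linarith
    · rw [mem_closedBall_zero_iff, h]
      exact hqnorm_ub n i
  haveI hcsX : ∀ n : ℕ, CompactSpace (closedBall (0:E) ((n:ℝ)+2) : Set E) :=
    fun n => isCompact_iff_compactSpace.mp (isCompact_closedBall _ _)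
  set T : ℕ → ((n : ℕ) → Fin (N n) → (closedBall (0:E) ((n:ℝ)+2) : Set E)) :=
    fun k n i => ⟨enumOf _ (hfin n k) (N n) (q n) i, he_ball n k i⟩ with hT
  obtain ⟨tl, -, φ, hφ, hTconv⟩ := isCompact_univ.tendsto_subseq (fun k => Set.mem_univ (T k))
  have hconv : ∀ (n : ℕ) (i : Fin (N n)),
      Tendsto (fun j => enumOf _ (hfin n (φ j)) (N n) (q n) i) atTop (𝓝 ((tl n i : E))) := by
    intro n i
    have h1 := (tendsto_pi_nhds.1 hTconv) n
    have h2 := (tendsto_pi_nhds.1 h1) i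
    exact (continuous_subtype_val.tendsto _).comp h2
  set t : (n : ℕ) → Fin (N n) → E := fun n i => (tl n i : E) with ht
  -- entries with limit away from the padding are eventually real points
  have hreal : ∀ (n : ℕ) (i : Fin (N n)), t n i ≠ q n i →
      ∀ᶠ j in atTop, enumOf _ (hfin n (φ j)) (N n) (q n) i ∈ u (φ j) ∩ closedBall (0:E) n := by
    intro n i hne
    by_contra hcon
    rw [Filter.not_eventually] at hcon
    have hfreq : ∃ᶠ j in atTop, enumOf _ (hfin n (φ j)) (N n) (q n) i = q n i := by
      apply hcon.mono
      intro j hj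
      rcases enumOf_mem_or (hfin n (φ j)) (q n) i with h | h
      · exact absurd h hj
      · exact h
    exact hne (tendsto_nhds_unique_of_frequently_eq (hconv n i) tendsto_const_nhds hfreq)
  have hqt_ne : ∀ (n : ℕ) (i : Fin (N n)), t n i ∈ closedBall (0:E) n → t n i ≠ q n i := by
    intro n i hmem heq
    have h1 : ‖t n i‖ ≤ (n:ℝ) := mem_closedBall_zero_iff.1 hmem
    rw [heq] at h1
    linarith [hqnorm_lb n i]
  have hdichot : ∀ (n : ℕ) (i : Fin (N n)),
      t n i ∈ closedBall (0:E) n ∨ t n i = q n i := by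
    intro n i
    by_cases h : t n i = q n i
    · exact Or.inr h
    · left
      exact isClosed_closedBall.mem_of_tendsto (hconv n i) ((hreal n i h).mono (fun j hj => hj.2))
  -- injectivity of the limit tuple
  have ht_inj : ∀ n : ℕ, Function.Injective (t n) := by
    intro n i j hij
    by_contra hne
    rcases hdichot n i with hi | hi <;> rcases hdichot n j with hj | hj
    · -- both real-type: contradiction with the separation bound
      have hi' := hreal n i (hqt_ne n i hi)
      have hj' := hreal n j (hqt_ne n j hj)
      have hc1 : ∀ᶠ j' in atTop,
          enumOf _ (hfin n (φ j')) (N n) (q n) i ∈ ball (t n i) (ε n / 3) :=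
        (hconv n i).eventually_mem (ball_mem_nhds _ (by linarith [hεpos n]))
      have hc2 : ∀ᶠ j' in atTop,
          enumOf _ (hfin n (φ j')) (N n) (q n) j ∈ ball (t n i) (ε n / 3) := by
        have := (hconv n j).eventually_mem (ball_mem_nhds (t n j) (show 0 < ε n / 3 by linarith [hεpos n]))
        rwa [← hij] at this
      obtain ⟨j₀, h1, h2, h3, h4⟩ := (hi'.and (hj'.and (hc1.and hc2))).exists
      have hne' : enumOf _ (hfin n (φ j₀)) (N n) (q n) i ≠ enumOf _ (hfin n (φ j₀)) (N n) (q n) j :=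
        (enumOf_inj (hfin n (φ j₀)) (q n) (hq_inj n) (fun i' => hq_not n (φ j₀) i')).ne hne
      have hs := hsep n (φ j₀) _ h1 _ h2 hne'
      have hd1 : dist (enumOf _ (hfin n (φ j₀)) (N n) (q n) i) (t n i) < ε n / 3 := mem_ball.1 h3
      have hd2 : dist (enumOf _ (hfin n (φ j₀)) (N n) (q n) j) (t n i) < ε n / 3 := mem_ball.1 h4
      have htri := dist_triangle (enumOf _ (hfin n (φ j₀)) (N n) (q n) i) (t n i)
        (enumOf _ (hfin n (φ j₀)) (N n) (q n) j)
      rw [dist_comm (t n i)] at htri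
      linarith [hεpos n]
    · -- i real, j pad : norms differ
      have h1 : ‖t n i‖ ≤ (n:ℝ) := mem_closedBall_zero_iff.1 hi
      rw [hij, hj] at h1
      linarith [hqnorm_lb n j]
    · have h1 : ‖t n j‖ ≤ (n:ℝ) := mem_closedBall_zero_iff.1 hj
      rw [← hij, hi] at h1
      linarith [hqnorm_lb n i]
    · rw [hi, hj] at hij
      exact hne (hq_inj n hij)
  -- capture lemma: limits of sequences of real points are limit entries
  have hcapture : ∀ (n : ℕ) (x : E) (p : ℕ → E),
      (∀ᶠ j in atTop, p j ∈ u (φ j) ∩ closedBall (0:E) n) → Tendsto p atTop (𝓝 x) →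
      ∃ i : Fin (N n), t n i = x := by
    intro n x p hev hpx
    obtain ⟨j₀, hj₀⟩ := hev.exists
    have hN0 : 0 < N n := lt_of_lt_of_le
      (Finset.card_pos.2 ⟨p j₀, (hfin n (φ j₀)).mem_toFinset.2 hj₀⟩) (hcount n (φ j₀))
    haveI : Nonempty (Fin (N n)) := ⟨⟨0, hN0⟩⟩
    have hex : ∀ j : ℕ, ∃ i : Fin (N n),
        (p j ∈ u (φ j) ∩ closedBall (0:E) n → enumOf _ (hfin n (φ j)) (N n) (q n) i = p j) := by
      intro j
      by_cases h : p j ∈ u (φ j) ∩ closedBall (0:E) n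
      · obtain ⟨i, _, hi⟩ := enumOf_surj (hfin n (φ j)) (q n) (hcount n (φ j)) h
        exact ⟨i, fun _ => hi⟩
      · exact ⟨Classical.arbitrary _, fun h' => absurd h' h⟩
    choose I hI using hex
    obtain ⟨i, hinf⟩ := Finite.exists_infinite_fiber I
    have hfreq : ∃ᶠ j in atTop, I j = i := by
      rw [Nat.frequently_atTop_iff_infinite]
      have := Set.infinite_coe_iff.1 hinf
      convert this using 1
      ext; simp
    have hfreq2 : ∃ᶠ j in atTop, enumOf _ (hfin n (φ j)) (N n) (q n) i = p j := by
      apply (hfreq.and_eventually hev).mono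
      rintro j ⟨h1, h2⟩
      rw [← h1]
      exact hI j h2
    exact ⟨i, tendsto_nhds_unique_of_frequently_eq (hconv n i) hpx hfreq2⟩
  -- the limit configuration
  set L : ℕ → Set E := fun n => Set.range (t n) ∩ closedBall (0:E) n with hLdef
  set γ' : Set E := ⋃ n, L n with hγ'def
  have hLsub : ∀ n, L n ⊆ γ' := fun n => Set.subset_iUnion L n
  have hconsist : ∀ (n' n : ℕ) (x : E), x ∈ L n' → ‖x‖ < (n:ℝ) → x ∈ L n := by
    intro n' n x hx hxn
    obtain ⟨⟨i, hi⟩, hxball⟩ := hx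
    have hne : t n' i ≠ q n' i := hqt_ne n' i (hi ▸ hxball)
    have hev1 := hreal n' i hne
    have hconv' : Tendsto (fun j => enumOf _ (hfin n' (φ j)) (N n') (q n') i) atTop (𝓝 x) := by
      rw [← hi]
      exact hconv n' i
    have hev2 : ∀ᶠ j in atTop, enumOf _ (hfin n' (φ j)) (N n') (q n') i ∈ ball x ((n:ℝ) - ‖x‖) :=
      hconv'.eventually_mem (ball_mem_nhds _ (by linarith))
    have hev : ∀ᶠ j in atTop,
        enumOf _ (hfin n' (φ j)) (N n') (q n') i ∈ u (φ j) ∩ closedBall (0:E) n := by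
      filter_upwards [hev1, hev2] with j h1 h2
      refine ⟨h1.1, mem_closedBall_zero_iff.2 ?_⟩
      have h3 : dist (enumOf _ (hfin n' (φ j)) (N n') (q n') i) x < (n:ℝ) - ‖x‖ := mem_ball.1 h2
      calc ‖enumOf _ (hfin n' (φ j)) (N n') (q n') i‖
          ≤ dist (enumOf _ (hfin n' (φ j)) (N n') (q n') i) x + ‖x‖ := by
            rw [dist_eq_norm]
            simpa using norm_add_le (enumOf _ (hfin n' (φ j)) (N n') (q n') i - x) x
        _ ≤ (n:ℝ) := by linarith
    obtain ⟨i', hi'⟩ := hcapture n x _ hev hconv'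
    exact ⟨⟨i', hi'⟩, mem_closedBall_zero_iff.2 hxn.le⟩
  have hγ'conf : IsConfiguration γ' := by
    intro K hK
    obtain ⟨R, hR⟩ := hK.isBounded.subset_closedBall 0
    set n₀ : ℕ := ⌈R⌉₊ + 1 with hn₀
    apply Set.Finite.subset (Set.finite_range (t n₀))
    rintro x ⟨hxγ, hxK⟩
    obtain ⟨n', hn'⟩ := Set.mem_iUnion.1 hxγ
    have hxn : ‖x‖ < (n₀:ℝ) := by
      have h1 : ‖x‖ ≤ R := mem_closedBall_zero_iff.1 (hR hxK)
      have h2 : R ≤ (⌈R⌉₊ : ℝ) := Nat.le_ceil R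
      have h3 : ((⌈R⌉₊:ℕ) : ℝ) < (n₀:ℝ) := by
        rw [hn₀]
        push_cast
        linarith
      linarith
    exact (hconsist n' n₀ x hn' hxn).1
  refine ⟨φ, hφ, γ', hγ'conf, ?_⟩
  intro f hfc hfcs
  obtain ⟨R, hR⟩ := hfcs.isBounded.subset_closedBall 0
  set n : ℕ := ⌈R⌉₊ + 1 with hn
  have hts : ∀ x : E, x ∈ tsupport f → ‖x‖ < (n:ℝ) := by
    intro x hx
    have h1 : ‖x‖ ≤ R := mem_closedBall_zero_iff.1 (hR hx)
    have h2 : R ≤ (⌈R⌉₊ : ℝ) := Nat.le_ceil R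
    have h3 : ((⌈R⌉₊:ℕ):ℝ) < (n:ℝ) := by rw [hn]; push_cast; linarith
    linarith
  have hinj : ∀ j, Function.Injective (fun i => enumOf _ (hfin n (φ j)) (N n) (q n) i) :=
    fun j => enumOf_inj _ _ (hq_inj n) (fun i => hq_not n (φ j) i)
  have hA : ∀ j, ∑ᶠ x ∈ (u ∘ φ) j, f x
      = ∑ i : Fin (N n), f (enumOf _ (hfin n (φ j)) (N n) (q n) i) := by
    intro j
    have hfin' : ((u (φ j)) ∩ tsupport f).Finite := hF _ (hu (φ j)) _ hfcs
    have hcomp' : (u ∘ φ) j = u (φ j) := rfl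
    rw [hcomp', finsum_mem_eq_sum_ts _ f hfin']
    have himg : ∑ x ∈ Finset.univ.image (fun i => enumOf _ (hfin n (φ j)) (N n) (q n) i), f x
        = ∑ i : Fin (N n), f (enumOf _ (hfin n (φ j)) (N n) (q n) i) :=
      Finset.sum_image (fun x _ y _ h => hinj j h)
    rw [← himg]
    apply Finset.sum_subset
    · intro x hx
      rw [Set.Finite.mem_toFinset] at hx
      have hxball : x ∈ u (φ j) ∩ closedBall (0:E) n :=
        ⟨hx.1, mem_closedBall_zero_iff.2 (hts x hx.2).le⟩
      obtain ⟨i, -, hi⟩ := enumOf_surj (hfin n (φ j)) (q n) (hcount n (φ j)) hxball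
      exact Finset.mem_image.2 ⟨i, Finset.mem_univ _, hi⟩
    · intro x hx hnx
      by_contra hfx
      have hx1 : x ∈ tsupport f := subset_tsupport f hfx
      obtain ⟨i, -, hi⟩ := Finset.mem_image.1 hx
      rcases enumOf_mem_or (hfin n (φ j)) (q n) i with hm | hm
      · exact hnx (hfin'.mem_toFinset.2 ⟨(hi ▸ hm : x ∈ u (φ j) ∩ closedBall (0:E) n).1, hx1⟩)
      · rw [hm] at hi
        have h5 := hts x hx1
        rw [← hi] at h5
        linarith [hqnorm_lb n i]
  have hB : Tendsto (fun j => ∑ i : Fin (N n), f (enumOf _ (hfin n (φ j)) (N n) (q n) i)) atTop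
      (𝓝 (∑ i : Fin (N n), f (t n i))) :=
    tendsto_finset_sum _ (fun i _ => (hfc.tendsto _).comp (hconv n i))
  have hCeq : ∑ i : Fin (N n), f (t n i) = ∑ᶠ x ∈ γ', f x := by
    have hγfin : (γ' ∩ tsupport f).Finite := hγ'conf _ hfcs
    rw [finsum_mem_eq_sum_ts _ f hγfin]
    have himg : ∑ x ∈ Finset.univ.image (t n), f x = ∑ i : Fin (N n), f (t n i) :=
      Finset.sum_image (fun x _ y _ h => ht_inj n h)
    rw [← himg]
    symm
    apply Finset.sum_subset
    · intro x hx
      rw [Set.Finite.mem_toFinset] at hx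
      obtain ⟨n', hn'⟩ := Set.mem_iUnion.1 hx.1
      have hxL : x ∈ L n := hconsist n' n x hn' (hts x hx.2)
      obtain ⟨i, hi⟩ := hxL.1
      exact Finset.mem_image.2 ⟨i, Finset.mem_univ _, hi⟩
    · intro x hx hnx
      by_contra hfx
      have hx1 : x ∈ tsupport f := subset_tsupport f hfx
      obtain ⟨i, -, hi⟩ := Finset.mem_image.1 hx
      have hxL : x ∈ L n := ⟨⟨i, hi⟩, mem_closedBall_zero_iff.2 (hts x hx1).le⟩
      exact hnx (hγfin.mem_toFinset.2 ⟨hLsub n hxL, hx1⟩)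
  have hfinal := hB
  rw [hCeq] at hfinal
  exact hfinal.congr (fun j => (hA j).symm)


lemma deltaInv_attained {γ B : Set E} (h : (γ ∩ B).Finite) (hpos : 0 < deltaInv γ B) :
    ∃ x ∈ γ ∩ B, ∃ y ∈ γ ∩ B, x ≠ y ∧ deltaInv γ B = 1 / dist x y := by
  by_cases hne : {r | ∃ x ∈ γ ∩ B, ∃ y ∈ γ ∩ B, x ≠ y ∧ r = 1 / dist x y}.Nonempty
  · exact hne.csSup_mem (deltaInv_set_finite h)
  · rw [Set.not_nonempty_iff_eq_empty] at hne
    rw [deltaInv, hne, Real.sSup_empty] at hpos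
    exact absurd hpos (lt_irrefl 0)

lemma count_le_sum (γ : Set E) (hγ : IsConfiguration γ) (f : E → ℝ)
    (hc : HasCompactSupport f) (h0 : ∀ x, 0 ≤ f x) (n : ℝ)
    (h1 : ∀ x ∈ closedBall (0:E) n, f x = 1) :
    ((γ ∩ closedBall (0:E) n).ncard : ℝ) ≤ ∑ᶠ x ∈ γ, f x := by
  have hfin := hγ _ hc
  have hfin2 : (γ ∩ closedBall (0:E) n).Finite := hγ _ (isCompact_closedBall _ _)
  rw [finsum_mem_eq_sum_ts γ f hfin]
  have hsub : hfin2.toFinset ⊆ hfin.toFinset := by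
    intro x hx
    rw [Set.Finite.mem_toFinset] at hx ⊢
    refine ⟨hx.1, subset_tsupport f ?_⟩
    simp [Function.mem_support, h1 x hx.2]
  have h1' : ∑ x ∈ hfin2.toFinset, f x = (γ ∩ closedBall (0:E) n).ncard := by
    rw [Finset.sum_congr rfl (fun x hx => h1 x (hfin2.mem_toFinset.1 hx).2),
      Finset.sum_const, Set.ncard_eq_toFinset_card _ hfin2]
    simp
  rw [← h1']
  exact Finset.sum_le_sum_of_subset_of_nonneg hsub (fun x _ _ => h0 x)

lemma pair_le_sum (γ : Set E) (hγ : IsConfiguration γ) (f : E → ℝ)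
    (hc : HasCompactSupport f) (h0 : ∀ x, 0 ≤ f x) {a b : E}
    (ha : a ∈ γ) (hb : b ∈ γ) (hab : a ≠ b) : f a + f b ≤ ∑ᶠ x ∈ γ, f x := by
  classical
  have hfin := hγ _ hc
  rw [finsum_mem_eq_sum_ts γ f hfin]
  set T := hfin.toFinset with hT
  have hmem : ∀ c : E, c ∈ γ → c ∉ T → f c = 0 := by
    intro c hcγ hcT
    rw [hT, Set.Finite.mem_toFinset] at hcT
    by_contra hfc
    exact hcT ⟨hcγ, subset_tsupport f hfc⟩
  by_cases haT : a ∈ T <;> by_cases hbT : b ∈ T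
  · calc f a + f b = ∑ x ∈ ({a, b} : Finset E), f x := (Finset.sum_pair hab).symm
      _ ≤ ∑ x ∈ T, f x := Finset.sum_le_sum_of_subset_of_nonneg
          (by intro x hx; rcases Finset.mem_insert.1 hx with rfl | hx
              · exact haT
              · rw [Finset.mem_singleton.1 hx]; exact hbT)
          (fun x _ _ => h0 x)
  · rw [hmem b hb hbT, add_zero]
    exact Finset.single_le_sum (fun x _ => h0 x) haT
  · rw [hmem a ha haT, zero_add]
    exact Finset.single_le_sum (fun x _ => h0 x) hbT
  · rw [hmem a ha haT, hmem b hb hbT, add_zero]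
    exact Finset.sum_nonneg (fun x _ => h0 x)

lemma exists_bump (c : E) (r₁ r₂ : ℝ) (h1 : 0 < r₁) (h12 : r₁ < r₂) :
    ∃ f : E → ℝ, Continuous f ∧ HasCompactSupport f ∧ (∀ x, 0 ≤ f x) ∧ (∀ x, f x ≤ 1) ∧
      (∀ x, dist x c ≤ r₁ → f x = 1) ∧ tsupport f ⊆ closedBall c r₂ := by
  set f : E → ℝ := fun x => max 0 (min 1 ((r₂ - dist x c) / (r₂ - r₁))) with hf
  have hzero : ∀ x : E, ¬ x ∈ closedBall c r₂ → f x = 0 := by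
    intro x hx
    have hlt : r₂ < dist x c := by simpa [not_le] using hx
    have : (r₂ - dist x c) / (r₂ - r₁) ≤ 0 :=
      div_nonpos_of_nonpos_of_nonneg (by linarith) (by linarith)
    simp only [hf, max_eq_left_iff]
    exact min_le_of_right_le this
  have hts : tsupport f ⊆ closedBall c r₂ := by
    apply closure_minimal _ isClosed_closedBall
    intro x hx
    by_contra hc
    exact hx (hzero x hc)
  refine ⟨f, ?_, ?_, ?_, ?_, ?_, hts⟩
  · exact continuous_const.max (continuous_const.min
      ((continuous_const.sub (continuous_id.dist continuous_const)).div_const _))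
  · exact HasCompactSupport.intro (isCompact_closedBall c r₂) hzero
  · intro x; exact le_max_left _ _
  · intro x; exact max_le (by norm_num) (min_le_left _ _)
  · intro x hx
    have h2 : (1:ℝ) ≤ (r₂ - dist x c) / (r₂ - r₁) := by
      rw [le_div_iff₀ (by linarith)]; linarith
    simp only [hf, min_eq_left h2]
    exact max_eq_right zero_le_one

/-- an isolated neighborhood of a point w.r.t. a configuration -/
lemma exists_isolating_radius (γ' : Set E) (hγ' : IsConfiguration γ') (x : E) :
    ∃ r : ℝ, 0 < r ∧ r < 1 ∧ ∀ z ∈ γ', z ∈ closedBall x r → z = x := by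
  classical
  have hS : ((γ' ∩ closedBall x 1) \ {x}).Finite :=
    ((hγ' _ (isCompact_closedBall x 1)).diff)
  by_cases hne : (hS.toFinset.image (fun z => dist z x)).Nonempty
  · set m := (hS.toFinset.image (fun z => dist z x)).min' hne with hm
    have hmpos : 0 < m := by
      have := (hS.toFinset.image (fun z => dist z x)).min'_mem hne
      rw [← hm] at this
      rcases Finset.mem_image.1 this with ⟨z, hz, hzd⟩
      rw [Set.Finite.mem_toFinset] at hz
      have : z ≠ x := by simpa using hz.2
      rw [← hzd]
      exact dist_pos.2 this
    refine ⟨min (1/2) (m/2), by positivity, by simp [lt_min_iff]; norm_num, ?_⟩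
    intro z hz hzb
    by_contra hzx
    have hzS : z ∈ hS.toFinset := by
      rw [Set.Finite.mem_toFinset]
      refine ⟨⟨hz, ?_⟩, by simpa using hzx⟩
      exact mem_closedBall.2 ((mem_closedBall.1 hzb).trans (by simp [min_le_iff]; norm_num))
    have hmin : m ≤ dist z x :=
      Finset.min'_le _ _ (Finset.mem_image.2 ⟨z, hzS, rfl⟩)
    have := mem_closedBall.1 hzb
    have : dist z x ≤ m/2 := this.trans (min_le_right _ _)
    linarith
  · refine ⟨1/2, by norm_num, by norm_num, ?_⟩
    intro z hz hzb
    by_contra hzx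
    apply hne
    refine ⟨dist z x, Finset.mem_image.2 ⟨z, ?_, rfl⟩⟩
    rw [Set.Finite.mem_toFinset]
    exact ⟨⟨hz, mem_closedBall.2 ((mem_closedBall.1 hzb).trans (by norm_num))⟩, by simpa using hzx⟩


/-- Forward direction -/
lemma forward (F : Set (Set (EuclideanSpace ℝ (Fin d))))
    (hF : ∀ γ ∈ F, IsConfiguration γ)
    (hcomp : ∀ u : ℕ → Set (EuclideanSpace ℝ (Fin d)), (∀ k, u k ∈ F) →
      ∃ φ : ℕ → ℕ, StrictMono φ ∧
        ∃ γ' : Set (EuclideanSpace ℝ (Fin d)), IsConfiguration γ' ∧ VagueTendsto (u ∘ φ) γ') :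
    (∀ n : ℕ, ∃ C : ℝ, ∀ γ ∈ F,
      ((γ ∩ closedBall (0 : EuclideanSpace ℝ (Fin d)) n).ncard : ℝ)
        + deltaInv γ (closedBall (0 : EuclideanSpace ℝ (Fin d)) n) ≤ C) := by
  intro n
  by_contra hC
  push_neg at hC
  have hC' : ∀ m : ℕ, ∃ γ ∈ F,
      (m:ℝ) < ((γ ∩ closedBall (0:E) n).ncard : ℝ) + deltaInv γ (closedBall (0:E) n) :=
    fun m => by
      obtain ⟨γ, hγF, hγ⟩ := hC (m:ℝ)
      exact ⟨γ, hγF, hγ⟩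
  choose u huF hu using hC'
  obtain ⟨φ, hφ, γ', hγ', hvt⟩ := hcomp u huF
  set a : ℕ → ℝ := fun k => ((u (φ k) ∩ closedBall (0:E) n).ncard : ℝ) with ha
  set b : ℕ → ℝ := fun k => deltaInv (u (φ k)) (closedBall (0:E) n) with hb
  have hab : ∀ k : ℕ, (k:ℝ) < a k + b k := fun k =>
    lt_of_le_of_lt (Nat.cast_le.2 hφ.le_apply) (hu (φ k))
  have hcases : (∃ᶠ k : ℕ in atTop, (k:ℝ)/2 ≤ a k) ∨ (∃ᶠ k : ℕ in atTop, (k:ℝ)/2 ≤ b k) := by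
    by_contra h
    push_neg at h
    obtain ⟨h1, h2⟩ := h
    obtain ⟨k, hk1, hk2⟩ := (h1.and h2).exists
    have := hab k
    linarith
  rcases hcases with hcase | hcase
  · -- unbounded counts
    obtain ⟨f, hfc, hfcs, hf0, hf1, hfone, _⟩ :=
      exists_bump (0:E) ((n:ℝ)+1) ((n:ℝ)+2) (by positivity) (by linarith)
    have hle : ∀ k, a k ≤ ∑ᶠ x ∈ (u ∘ φ) k, f x := by
      intro k
      exact count_le_sum _ (hF _ (huF _)) f hfcs hf0 n
        (fun x hx => hfone x (by
          have := mem_closedBall.1 hx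
          rw [dist_zero_right] at this ⊢
          linarith))
    have htend := hvt f hfc hfcs
    set L := ∑ᶠ x ∈ γ', f x with hL
    have hev : ∀ᶠ k : ℕ in atTop, (∑ᶠ x ∈ (u ∘ φ) k, f x) ≤ L + 1 :=
      htend.eventually (eventually_le_nhds (by linarith))
    have hev2 : ∀ᶠ k : ℕ in atTop, (2*L+4 : ℝ) ≤ (k:ℝ) :=
      tendsto_natCast_atTop_atTop.eventually_ge_atTop (2*L+4)
    obtain ⟨k, hk1, hk2, hk3⟩ := (hcase.and_eventually (hev.and hev2)).exists
    have := hle k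
    linarith
  · -- unbounded inverse separation
    have hfreq : ∃ᶠ k : ℕ in atTop, (1 ≤ k ∧ (k:ℝ)/2 ≤ b k) :=
      ((eventually_ge_atTop 1).and_frequently hcase)
    obtain ⟨ψ, hψ, hψP⟩ := extraction_of_frequently_atTop hfreq
    have hpair : ∀ j : ℕ, ∃ p : E × E,
        p.1 ∈ u (φ (ψ j)) ∩ closedBall (0:E) n ∧ p.2 ∈ u (φ (ψ j)) ∩ closedBall (0:E) n ∧
        p.1 ≠ p.2 ∧ dist p.1 p.2 ≤ 2 / (ψ j : ℝ) := by
      intro j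
      obtain ⟨hj1, hj2⟩ := hψP j
      have hψpos : (0:ℝ) < (ψ j : ℝ) := by exact_mod_cast hj1
      have hbpos : 0 < b (ψ j) := lt_of_lt_of_le (by positivity) hj2
      obtain ⟨x, hx, y, hy, hxy, hd⟩ :=
        deltaInv_attained (hF _ (huF _) _ (isCompact_closedBall _ _)) hbpos
      refine ⟨(x, y), hx, hy, hxy, ?_⟩
      have hdpos : 0 < dist x y := dist_pos.2 hxy
      have hj2' : (ψ j : ℝ)/2 ≤ 1 / dist x y := by rw [← hd]; exact hj2
      have hmul : (ψ j : ℝ) * dist x y ≤ 1 * 2 :=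
        (div_le_div_iff₀ (by norm_num) hdpos).1 hj2'
      rw [show dist (x,y).1 (x,y).2 = dist x y from rfl, le_div_iff₀ hψpos]
      nlinarith
    choose p hp1 hp2 hp3 hp4 using hpair
    have hdist0 : Tendsto (fun j => dist (p j).1 (p j).2) atTop (𝓝 0) := by
      apply squeeze_zero (fun j => dist_nonneg) hp4
      exact (tendsto_const_div_atTop_nhds_zero_nat 2).comp hψ.tendsto_atTop
    have hpmem : ∀ j, p j ∈ (closedBall (0:E) n) ×ˢ (closedBall (0:E) n) :=
      fun j => ⟨(hp1 j).2, (hp2 j).2⟩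
    obtain ⟨q, _, ρ, hρ, hqt⟩ :=
      ((isCompact_closedBall (0:E) n).prod (isCompact_closedBall (0:E) n)).tendsto_subseq hpmem
    have hxt : Tendsto (fun j => (p (ρ j)).1) atTop (𝓝 q.1) :=
      (continuous_fst.tendsto q).comp hqt
    have hyt : Tendsto (fun j => (p (ρ j)).2) atTop (𝓝 q.2) :=
      (continuous_snd.tendsto q).comp hqt
    have hq12 : q.1 = q.2 := by
      have h1 := hxt.dist hyt
      have h2 : Tendsto (fun j => dist (p (ρ j)).1 (p (ρ j)).2) atTop (𝓝 0) :=
        hdist0.comp hρ.tendsto_atTop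
      exact dist_eq_zero.1 (tendsto_nhds_unique h1 h2)
    obtain ⟨r, hr0, hr1, hriso⟩ := exists_isolating_radius γ' hγ' q.1
    obtain ⟨g, hgc, hgcs, hg0, hg1, hgone, hgts⟩ :=
      exists_bump q.1 (r/2) r (by positivity) (by linarith)
    -- the limit pairing is at most 1
    have hlim_le : ∑ᶠ x ∈ γ', g x ≤ 1 := by
      have hfin := hγ' _ hgcs
      rw [finsum_mem_eq_sum_ts γ' g hfin]
      have hsub : hfin.toFinset ⊆ ({q.1} : Finset E) := by
        intro z hz
        rw [Set.Finite.mem_toFinset] at hz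
        have hz2 : z ∈ closedBall q.1 r := hgts hz.2
        simp [hriso z hz.1 hz2]
      calc ∑ x ∈ hfin.toFinset, g x ≤ ∑ x ∈ ({q.1} : Finset E), g x :=
            Finset.sum_le_sum_of_subset_of_nonneg hsub (fun x _ _ => hg0 x)
        _ = g q.1 := Finset.sum_singleton _ _
        _ ≤ 1 := hg1 _
    -- eventually the pairing along the subsequence is at least 2
    have htend : Tendsto (fun j => ∑ᶠ x ∈ u (φ (ψ (ρ j))), g x) atTop (𝓝 (∑ᶠ x ∈ γ', g x)) :=
      (hvt g hgc hgcs).comp ((hψ.comp hρ).tendsto_atTop)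
    have hev2 : ∀ᶠ j in atTop, (2:ℝ) ≤ ∑ᶠ x ∈ u (φ (ψ (ρ j))), g x := by
      have hx2 : ∀ᶠ j in atTop, (p (ρ j)).1 ∈ closedBall q.1 (r/2) :=
        hxt.eventually_mem (closedBall_mem_nhds q.1 (by positivity))
      have hy2 : ∀ᶠ j in atTop, (p (ρ j)).2 ∈ closedBall q.1 (r/2) := by
        rw [hq12]
        exact hyt.eventually_mem (closedBall_mem_nhds q.2 (by positivity))
      filter_upwards [hx2, hy2] with j h1 h2
      have e1 : g (p (ρ j)).1 = 1 := hgone _ (mem_closedBall.1 h1)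
      have e2 : g (p (ρ j)).2 = 1 := hgone _ (mem_closedBall.1 h2)
      have := pair_le_sum (u (φ (ψ (ρ j)))) (hF _ (huF _)) g hgcs hg0
        (hp1 (ρ j)).1 (hp2 (ρ j)).1 (hp3 (ρ j))
      rw [e1, e2] at this
      linarith
    have : (2:ℝ) ≤ ∑ᶠ x ∈ γ', g x := ge_of_tendsto htend hev2
    linarith


theorem relatively_compact_iff_bounded_counts_and_separation
    (d : ℕ) (hd : 1 ≤ d) (F : Set (Set (EuclideanSpace ℝ (Fin d))))
    (hF : ∀ γ ∈ F, IsConfiguration γ) :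
    (∀ u : ℕ → Set (EuclideanSpace ℝ (Fin d)), (∀ k, u k ∈ F) →
      ∃ φ : ℕ → ℕ, StrictMono φ ∧
        ∃ γ' : Set (EuclideanSpace ℝ (Fin d)), IsConfiguration γ' ∧ VagueTendsto (u ∘ φ) γ')
    ↔
    (∀ n : ℕ, ∃ C : ℝ, ∀ γ ∈ F,
      ((γ ∩ closedBall (0 : EuclideanSpace ℝ (Fin d)) n).ncard : ℝ)
        + deltaInv γ (closedBall (0 : EuclideanSpace ℝ (Fin d)) n) ≤ C) := by
  constructor
  · intro hcomp
    exact forward F hF hcomp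
  · intro hbd u hu
    exact backward hd F hF hbd u hu

end
end

section
/- Let d ∈ ℕ, d ≥ 1, let φ ∈ Φ and let c > 0. Then the set K_c := { γ : γ is a configuration over ℝ^d and ⟨γ × γ, Ψ_φ⟩ ≤ c } is sequentially compact with respect to vague convergence: every sequence in K_c admits a subsequence converging vaguely to some configuration belonging to K_c. -/
open Filter Topology Metric Set Classical

noncomputable section

/-- The class `Φ` of positive continuous rotation-invariant functions vanishing at infinity. -/
def IsPhi {d : ℕ} (φ : EuclideanSpace ℝ (Fin d) → ℝ) : Prop :=
  Continuous φ ∧ (∀ x, 0 < φ x) ∧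
    (∀ x y : EuclideanSpace ℝ (Fin d), ‖x‖ = ‖y‖ → φ x = φ y) ∧
    (∀ ε > (0 : ℝ), ∃ R : ℝ, ∀ x : EuclideanSpace ℝ (Fin d), R ≤ ‖x‖ → φ x < ε)

/-- `Ψ_φ(x,y) = φ(x)φ(y)(|x-y|+1)/|x-y|` off the diagonal, `0` on the diagonal. -/
def Psi {d : ℕ} (φ : EuclideanSpace ℝ (Fin d) → ℝ) (x y : EuclideanSpace ℝ (Fin d)) : ℝ :=
  if x = y then 0 else φ x * φ y * (dist x y + 1) / dist x y

/-- `⟨γ × γ, Ψ_φ⟩ ∈ [0,∞]`: the sum of `Ψ_φ` over all pairs of distinct points of `γ`. -/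
def pairPsi {d : ℕ} (φ : EuclideanSpace ℝ (Fin d) → ℝ)
    (γ : Set (EuclideanSpace ℝ (Fin d))) : ENNReal :=
  ∑' p : (γ ×ˢ γ : Set (EuclideanSpace ℝ (Fin d) × EuclideanSpace ℝ (Fin d))),
    ENNReal.ofReal (Psi φ p.1.1 p.1.2)

section Aux

variable {d : ℕ}

lemma psi_nonneg {φ : EuclideanSpace ℝ (Fin d) → ℝ} (hφ : ∀ x, 0 < φ x)
    (x y : EuclideanSpace ℝ (Fin d)) : 0 ≤ Psi φ x y := by
  unfold Psi
  split
  · exact le_rfl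
  · apply div_nonneg _ dist_nonneg
    have h1 := (hφ x).le
    have h2 := (hφ y).le
    have := dist_nonneg (x := x) (y := y)
    positivity

lemma pairPsi_eq_tsum_indicator (φ : EuclideanSpace ℝ (Fin d) → ℝ)
    (γ : Set (EuclideanSpace ℝ (Fin d))) :
    pairPsi φ γ = ∑' p : EuclideanSpace ℝ (Fin d) × EuclideanSpace ℝ (Fin d),
      (γ ×ˢ γ).indicator (fun p => ENNReal.ofReal (Psi φ p.1 p.2)) p := by
  exact tsum_subtype (γ ×ˢ γ) fun p => ENNReal.ofReal (Psi φ p.1 p.2)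

lemma psi_le_of_pairPsi_le {φ : EuclideanSpace ℝ (Fin d) → ℝ}
    {γ : Set (EuclideanSpace ℝ (Fin d))} {c : ℝ} (hc : 0 ≤ c)
    (hγ : pairPsi φ γ ≤ ENNReal.ofReal c) {x y : EuclideanSpace ℝ (Fin d)}
    (hx : x ∈ γ) (hy : y ∈ γ) : Psi φ x y ≤ c := by
  have h1 : ENNReal.ofReal (Psi φ x y) ≤ pairPsi φ γ :=
    ENNReal.le_tsum (⟨(x, y), Set.mk_mem_prod hx hy⟩ : (γ ×ˢ γ : Set _))
  exact (ENNReal.ofReal_le_ofReal_iff hc).1 (h1.trans hγ)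

lemma psi_tendsto {φ : EuclideanSpace ℝ (Fin d) → ℝ} (hφc : Continuous φ)
    {a b : ℕ → EuclideanSpace ℝ (Fin d)} {x y : EuclideanSpace ℝ (Fin d)}
    (ha : Tendsto a atTop (𝓝 x)) (hb : Tendsto b atTop (𝓝 y)) (hxy : x ≠ y) :
    Tendsto (fun k => Psi φ (a k) (b k)) atTop (𝓝 (Psi φ x y)) := by
  have hdist : Tendsto (fun k => dist (a k) (b k)) atTop (𝓝 (dist x y)) := ha.dist hb
  have hd0 : dist x y ≠ 0 := by
    simpa [dist_eq_zero] using hxy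
  have hne : ∀ᶠ k in atTop, a k ≠ b k := by
    filter_upwards [hdist.eventually_ne hd0] with k hk
    intro h; exact hk (by rw [h, dist_self])
  have key : Tendsto (fun k => φ (a k) * φ (b k) * (dist (a k) (b k) + 1) / dist (a k) (b k))
      atTop (𝓝 (φ x * φ y * (dist x y + 1) / dist x y)) := by
    exact ((((hφc.tendsto x).comp ha).mul ((hφc.tendsto y).comp hb)).mul
      (hdist.add tendsto_const_nhds)).div hdist hd0
  have : Psi φ x y = φ x * φ y * (dist x y + 1) / dist x y := if_neg hxy
  rw [this]
  apply key.congr'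
  filter_upwards [hne] with k hk
  exact (if_neg hk).symm

lemma exists_sep {φ : EuclideanSpace ℝ (Fin d) → ℝ} (hφc : Continuous φ)
    (hφpos : ∀ x, 0 < φ x) {c : ℝ} (hc : 0 < c) (R : ℝ) :
    ∃ δ : ℝ, 0 < δ ∧ ∀ γ : Set (EuclideanSpace ℝ (Fin d)),
      pairPsi φ γ ≤ ENNReal.ofReal c → ∀ x ∈ γ, ∀ y ∈ γ,
        x ∈ closedBall (0 : EuclideanSpace ℝ (Fin d)) R →
        y ∈ closedBall (0 : EuclideanSpace ℝ (Fin d)) R → x ≠ y → δ ≤ dist x y := by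
  rcases le_or_gt 0 R with hR | hR
  · obtain ⟨z, hz, hmin⟩ := (isCompact_closedBall (0 : EuclideanSpace ℝ (Fin d)) R).exists_isMinOn
      ⟨0, mem_closedBall_self hR⟩ hφc.continuousOn
    set m := φ z with hm
    have hm0 : 0 < m := hφpos z
    refine ⟨m ^ 2 / c, by positivity, ?_⟩
    intro γ hγ x hx y hy hxR hyR hxy
    have hΨ : Psi φ x y ≤ c := psi_le_of_pairPsi_le hc.le hγ hx hy
    have hdpos : 0 < dist x y := dist_pos.2 hxy
    have hmx : m ≤ φ x := hmin hxR
    have hmy : m ≤ φ y := hmin hyR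
    have h1 : m ^ 2 / dist x y ≤ Psi φ x y := by
      rw [Psi, if_neg hxy]
      have hxy2 : m * m ≤ φ x * φ y := mul_le_mul hmx hmy hm0.le (hφpos x).le
      gcongr
      nlinarith [hxy2, hdpos]
    have h2 : m ^ 2 / dist x y ≤ c := h1.trans hΨ
    rw [div_le_iff₀ hdpos] at h2
    rw [div_le_iff₀ hc]
    linarith
  · exact ⟨1, one_pos, fun γ _ x _ y _ hxR _ _ => absurd hxR (by
      simp [closedBall_eq_empty.2 hR])⟩

lemma exists_card_bound (R δ : ℝ) (hδ : 0 < δ) :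
    ∃ N : ℕ, ∀ s : Set (EuclideanSpace ℝ (Fin d)),
      s ⊆ closedBall (0 : EuclideanSpace ℝ (Fin d)) R →
      (∀ x ∈ s, ∀ y ∈ s, x ≠ y → δ ≤ dist x y) → s.Finite ∧ s.ncard ≤ N := by
  obtain ⟨t, htf, hcov⟩ := (Metric.totallyBounded_iff.1
    (isCompact_closedBall (0 : EuclideanSpace ℝ (Fin d)) R).totallyBounded) (δ / 2)
    (by positivity)
  refine ⟨t.ncard, ?_⟩
  intro s hsub hsep
  have hF : ∀ x ∈ s, ∃ y ∈ t, x ∈ ball y (δ / 2) := by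
    intro x hx
    have := hcov (hsub hx)
    simpa using this
  classical
  set f : EuclideanSpace ℝ (Fin d) → EuclideanSpace ℝ (Fin d) := fun x =>
    if h : ∃ y ∈ t, x ∈ ball y (δ / 2) then h.choose else x with hf
  have hft : ∀ x ∈ s, f x ∈ t ∧ x ∈ ball (f x) (δ / 2) := by
    intro x hx
    have h := hF x hx
    rw [hf]; simp only [dif_pos h]
    exact ⟨h.choose_spec.1, h.choose_spec.2⟩
  have hinj : Set.InjOn f s := by
    intro x hx y hy hxy
    by_contra hne
    have h1 := (hft x hx).2
    have h2 := (hft y hy).2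
    rw [hxy] at h1
    rw [mem_ball] at h1 h2
    have : dist x y < δ := by
      calc dist x y ≤ dist x (f y) + dist (f y) y := dist_triangle _ _ _
        _ < δ / 2 + δ / 2 := add_lt_add h1 (by rw [dist_comm]; exact h2)
        _ = δ := by ring
    exact absurd this (not_lt.2 (hsep x hx y hy hne))
  have himg : f '' s ⊆ t := fun z ⟨x, hx, hxz⟩ => hxz ▸ (hft x hx).1
  have hfin : s.Finite := Set.Finite.of_finite_image (htf.subset himg) hinj
  refine ⟨hfin, ?_⟩
  calc s.ncard = (f '' s).ncard := (Set.ncard_image_of_injOn hinj).symm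
    _ ≤ t.ncard := Set.ncard_le_ncard himg htf

end Aux

/-- The sublevel set `K_c = {γ : ⟨γ × γ, Ψ_φ⟩ ≤ c}` is sequentially compact for vague
convergence. -/
theorem sublevel_set_of_pairPsi_seq_compact
    (d : ℕ) (hd : 1 ≤ d) (φ : EuclideanSpace ℝ (Fin d) → ℝ) (hφ : IsPhi φ)
    (c : ℝ) (hc : 0 < c)
    (u : ℕ → Set (EuclideanSpace ℝ (Fin d)))
    (hu : ∀ k, IsConfiguration (u k) ∧ pairPsi φ (u k) ≤ ENNReal.ofReal c) :
    ∃ ψ : ℕ → ℕ, StrictMono ψ ∧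
      ∃ γ : Set (EuclideanSpace ℝ (Fin d)), IsConfiguration γ ∧
        pairPsi φ γ ≤ ENNReal.ofReal c ∧ VagueTendsto (u ∘ ψ) γ := by
  classical
  obtain ⟨hφc, hφpos, -, -⟩ := hφ
  -- separation constants
  choose δ hδpos hδ using fun n : ℕ => exists_sep hφc hφpos hc (n : ℝ)
  -- cardinality bounds
  choose N hN using fun n : ℕ => exists_card_bound (d := d) (n : ℝ) (δ n) (hδpos n)
  have hufin : ∀ k n : ℕ,
      (u k ∩ closedBall (0 : EuclideanSpace ℝ (Fin d)) (n : ℝ)).Finite :=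
    fun k n => (hu k).1 _ (isCompact_closedBall _ _)
  have husep : ∀ k n : ℕ,
      ∀ x ∈ u k ∩ closedBall (0 : EuclideanSpace ℝ (Fin d)) (n : ℝ),
      ∀ y ∈ u k ∩ closedBall (0 : EuclideanSpace ℝ (Fin d)) (n : ℝ),
        x ≠ y → δ n ≤ dist x y :=
    fun k n x hx y hy hxy => hδ n (u k) (hu k).2 x hx.1 y hy.1 hx.2 hy.2 hxy
  set F : ℕ → ℕ → Finset (EuclideanSpace ℝ (Fin d)) := fun k n => (hufin k n).toFinset with hFdef
  have hFmem : ∀ k n x, x ∈ F k n ↔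
      x ∈ u k ∩ closedBall (0 : EuclideanSpace ℝ (Fin d)) (n : ℝ) :=
    fun k n x => (hufin k n).mem_toFinset
  have hFcard : ∀ k n, (F k n).card ≤ N n := by
    intro k n
    have h := (hN n _ inter_subset_right (husep k n)).2
    rwa [Set.ncard_eq_toFinset_card _ (hufin k n)] at h
  -- the encoding
  have hE : ∃ e : ℕ → ∀ n : ℕ,
        Fin (N n + 1) × (ℕ → (closedBall (0 : EuclideanSpace ℝ (Fin d)) (n : ℝ))),
      (∀ k n, ((e k n).1 : ℕ) = (F k n).card) ∧
      (∀ k n j, j < (F k n).card → ((e k n).2 j : EuclideanSpace ℝ (Fin d)) ∈ F k n) ∧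
      (∀ k n x, x ∈ F k n →
        ∃ j, j < (F k n).card ∧ ((e k n).2 j : EuclideanSpace ℝ (Fin d)) = x) ∧
      (∀ k n j j', j < (F k n).card → j' < (F k n).card → j ≠ j' →
        ((e k n).2 j : EuclideanSpace ℝ (Fin d)) ≠ ((e k n).2 j' : EuclideanSpace ℝ (Fin d))) := by
    refine ⟨fun k n => ⟨⟨(F k n).card, Nat.lt_succ_of_le (hFcard k n)⟩,
      fun j => if h : j < (F k n).card then
        ⟨((F k n).equivFin.symm ⟨j, h⟩ : EuclideanSpace ℝ (Fin d)), by
          have hmem := Finset.coe_mem ((F k n).equivFin.symm ⟨j, h⟩)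
          exact ((hFmem k n _).1 hmem).2⟩
      else ⟨0, mem_closedBall_self (Nat.cast_nonneg n)⟩⟩, ?_, ?_, ?_, ?_⟩
    · intro k n; rfl
    · intro k n j h
      simp only [dif_pos h]
      exact Finset.coe_mem _
    · intro k n x hx
      refine ⟨((F k n).equivFin ⟨x, hx⟩ : ℕ), ((F k n).equivFin ⟨x, hx⟩).isLt, ?_⟩
      simp only [dif_pos ((F k n).equivFin ⟨x, hx⟩).isLt, Fin.eta, Equiv.symm_apply_apply]
    · intro k n j j' hj hj' hjj' hEq
      simp only [dif_pos hj, dif_pos hj'] at hEq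
      apply hjj'
      have h2 := (F k n).equivFin.symm.injective (Subtype.ext hEq)
      exact congrArg Fin.val h2
  obtain ⟨e, he1, he2, he3, he4⟩ := hE
  have he5 : ∀ k n (f : EuclideanSpace ℝ (Fin d) → ℝ),
      ∑ x ∈ F k n, f x = ∑ j ∈ Finset.range (F k n).card,
        f ((e k n).2 j : EuclideanSpace ℝ (Fin d)) := by
    intro k n f
    have hinjOn : ∀ j ∈ Finset.range (F k n).card, ∀ j' ∈ Finset.range (F k n).card,
        ((e k n).2 j : EuclideanSpace ℝ (Fin d)) = ((e k n).2 j' : EuclideanSpace ℝ (Fin d)) →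
          j = j' := by
      intro j hj j' hj' heq
      by_contra hne
      exact he4 k n j j' (Finset.mem_range.1 hj) (Finset.mem_range.1 hj') hne heq
    have himg : (Finset.range (F k n).card).image
        (fun j => ((e k n).2 j : EuclideanSpace ℝ (Fin d))) = F k n := by
      apply Finset.eq_of_subset_of_card_le
      · intro x hx
        obtain ⟨j, hj, rfl⟩ := Finset.mem_image.1 hx
        exact he2 k n j (Finset.mem_range.1 hj)
      · rw [Finset.card_image_of_injOn (fun j hj j' hj' h => hinjOn j hj j' hj' h),
          Finset.card_range]
    conv_lhs => rw [← himg]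
    rw [Finset.sum_image hinjOn]
  -- extraction of a convergent subsequence in the compact coding space
  haveI : ∀ n : ℕ, CompactSpace (closedBall (0 : EuclideanSpace ℝ (Fin d)) (n : ℝ)) :=
    fun n => isCompact_iff_compactSpace.1 (isCompact_closedBall _ _)
  obtain ⟨L, ψ, hψ, hL⟩ := CompactSpace.tendsto_subseq e
  set m : ℕ → ℕ := fun n => ((L n).1 : ℕ) with hmdef
  set q : ℕ → ℕ → EuclideanSpace ℝ (Fin d) := fun n j => ((L n).2 j : EuclideanSpace ℝ (Fin d))
    with hqdef
  have hcard_ev : ∀ n : ℕ, ∀ᶠ k in atTop, (F (ψ k) n).card = m n := by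
    intro n
    have hcont : Continuous fun x : ∀ n : ℕ,
        Fin (N n + 1) × (ℕ → (closedBall (0 : EuclideanSpace ℝ (Fin d)) (n : ℝ))) =>
        (x n).1 := (continuous_apply n).fst
    have h1 : Tendsto (fun k => (e (ψ k) n).1) atTop (𝓝 ((L n).1)) :=
      (hcont.tendsto L).comp hL
    have h2 : ∀ᶠ k in atTop, (e (ψ k) n).1 ∈ ({(L n).1} : Set (Fin (N n + 1))) :=
      h1 ((isOpen_discrete ({(L n).1} : Set (Fin (N n + 1)))).mem_nhds rfl)
    filter_upwards [h2] with k hk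
    rw [Set.mem_singleton_iff] at hk
    rw [← he1 (ψ k) n]
    exact congrArg Fin.val hk
  have hq : ∀ n j, Tendsto (fun k => ((e (ψ k) n).2 j : EuclideanSpace ℝ (Fin d)))
      atTop (𝓝 (q n j)) := by
    intro n j
    have hcont : Continuous fun x : ∀ n : ℕ,
        Fin (N n + 1) × (ℕ → (closedBall (0 : EuclideanSpace ℝ (Fin d)) (n : ℝ))) =>
        ((x n).2 j : EuclideanSpace ℝ (Fin d)) :=
      continuous_subtype_val.comp ((continuous_apply j).comp (continuous_apply n).snd)
    exact (hcont.tendsto L).comp hL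
  set γ : Set (EuclideanSpace ℝ (Fin d)) :=
    {x | ∃ Fx : ℕ → EuclideanSpace ℝ (Fin d),
      (∀ᶠ k in atTop, Fx k ∈ u (ψ k)) ∧ Tendsto Fx atTop (𝓝 x)} with hγdef
  -- the limit points belong to γ
  have hqmem : ∀ n j, j < m n → q n j ∈ γ := by
    intro n j hj
    rw [hγdef, mem_setOf_eq]
    refine ⟨fun k => ((e (ψ k) n).2 j : EuclideanSpace ℝ (Fin d)), ?_, hq n j⟩
    filter_upwards [hcard_ev n] with k hk
    have hlt : j < (F (ψ k) n).card := by rw [hk]; exact hj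
    exact ((hFmem _ _ _).1 (he2 (ψ k) n j hlt)).1
  -- separation of the limit points
  have hqsep : ∀ n j j', j < m n → j' < m n → j ≠ j' → δ n ≤ dist (q n j) (q n j') := by
    intro n j j' hj hj' hjj'
    have hev : ∀ᶠ k in atTop, δ n ≤ dist ((e (ψ k) n).2 j : EuclideanSpace ℝ (Fin d))
        ((e (ψ k) n).2 j' : EuclideanSpace ℝ (Fin d)) := by
      filter_upwards [hcard_ev n] with k hk
      have h1 : j < (F (ψ k) n).card := by rw [hk]; exact hj
      have h2 : j' < (F (ψ k) n).card := by rw [hk]; exact hj'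
      exact husep (ψ k) n _ ((hFmem _ _ _).1 (he2 _ _ _ h1)) _ ((hFmem _ _ _).1 (he2 _ _ _ h2))
        (he4 _ _ _ _ h1 h2 hjj')
    exact ge_of_tendsto ((hq n j).dist (hq n j')) hev
  -- γ is locally contained in the limit points
  have hsub : ∀ n : ℕ, γ ∩ ball (0 : EuclideanSpace ℝ (Fin d)) (n : ℝ) ⊆
      {x | ∃ j, j < m n ∧ q n j = x} := by
    intro n x hx
    obtain ⟨hxγ, hxb⟩ := hx
    rw [hγdef, mem_setOf_eq] at hxγ
    obtain ⟨Fx, hFu, hFx⟩ := hxγ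
    have hxn : dist x 0 < (n : ℝ) := mem_ball.1 hxb
    have hev1 : ∀ᶠ k in atTop, Fx k ∈ ball x ((n : ℝ) - dist x 0) :=
      hFx (ball_mem_nhds x (by linarith))
    have hev : ∀ᶠ k in atTop, ∃ j, j < m n ∧
        ((e (ψ k) n).2 j : EuclideanSpace ℝ (Fin d)) = Fx k := by
      filter_upwards [hFu, hev1, hcard_ev n] with k h1 h2 h3
      have hFxb : Fx k ∈ closedBall (0 : EuclideanSpace ℝ (Fin d)) (n : ℝ) := by
        rw [mem_closedBall]
        have h2' := mem_ball.1 h2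
        calc dist (Fx k) 0 ≤ dist (Fx k) x + dist x 0 := dist_triangle _ _ _
          _ ≤ n := by linarith
      obtain ⟨j, hjc, hje⟩ := he3 (ψ k) n (Fx k) ((hFmem _ _ _).2 ⟨h1, hFxb⟩)
      refine ⟨j, ?_, hje⟩
      rw [← h3]; exact hjc
    have hex : ∃ j, j < m n ∧ ∃ᶠ k in atTop,
        ((e (ψ k) n).2 j : EuclideanSpace ℝ (Fin d)) = Fx k := by
      by_contra hcon
      push_neg at hcon
      have hall : ∀ᶠ k in atTop, ∀ j ∈ Finset.range (m n),
          ¬ ((e (ψ k) n).2 j : EuclideanSpace ℝ (Fin d)) = Fx k := by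
        rw [Filter.eventually_all_finset]
        intro j hj
        have h := hcon j (Finset.mem_range.1 hj)
        exact h
      obtain ⟨k, hk1, hk2⟩ := (hev.and hall).exists
      obtain ⟨j, hj1, hj2⟩ := hk1
      exact hk2 j (Finset.mem_range.2 hj1) hj2
    obtain ⟨j, hjm, hfreq⟩ := hex
    obtain ⟨θ, hθ, hθeq⟩ := extraction_of_frequently_atTop hfreq
    refine ⟨j, hjm, ?_⟩
    have h1 : Tendsto (fun i => ((e (ψ (θ i)) n).2 j : EuclideanSpace ℝ (Fin d)))
        atTop (𝓝 (q n j)) := (hq n j).comp hθ.tendsto_atTop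
    have h2 : Tendsto (fun i => Fx (θ i)) atTop (𝓝 x) := hFx.comp hθ.tendsto_atTop
    exact tendsto_nhds_unique (h1.congr fun i => hθeq i) h2
  have hconf : IsConfiguration γ := by
    intro K hK
    obtain ⟨R, hR⟩ := hK.isBounded.subset_closedBall 0
    obtain ⟨n, hn⟩ := exists_nat_gt R
    have hsubK : γ ∩ K ⊆ {x | ∃ j, j < m n ∧ q n j = x} := by
      rintro x ⟨hx1, hx2⟩
      apply hsub n
      refine ⟨hx1, ?_⟩
      have hxR := hR hx2
      rw [mem_closedBall] at hxR
      rw [mem_ball]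
      linarith
    have hfin : {x | ∃ j, j < m n ∧ q n j = x}.Finite := by
      have himg : {x | ∃ j, j < m n ∧ q n j = x} ⊆ (q n) '' {j | j < m n} := by
        rintro x ⟨j, hj, rfl⟩; exact ⟨j, hj, rfl⟩
      exact ((Set.finite_lt_nat (m n)).image (q n)).subset himg
    exact hfin.subset hsubK
  have hpair : pairPsi φ γ ≤ ENNReal.ofReal c := by
    rw [pairPsi_eq_tsum_indicator]
    apply Summable.tsum_le_of_sum_le ENNReal.summable
    intro s
    have hFFex : ∀ x : EuclideanSpace ℝ (Fin d), ∃ Fx : ℕ → EuclideanSpace ℝ (Fin d),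
        x ∈ γ → (∀ᶠ k in atTop, Fx k ∈ u (ψ k)) ∧ Tendsto Fx atTop (𝓝 x) := by
      intro x
      by_cases hx : x ∈ γ
      · rw [hγdef, mem_setOf_eq] at hx
        obtain ⟨Fx, h1, h2⟩ := hx
        exact ⟨Fx, fun _ => ⟨h1, h2⟩⟩
      · exact ⟨fun _ => x, fun h => absurd h hx⟩
    choose FF hFF using hFFex
    set s' : Finset (EuclideanSpace ℝ (Fin d) × EuclideanSpace ℝ (Fin d)) :=
      s.filter (fun p => p ∈ γ ×ˢ γ ∧ p.1 ≠ p.2) with hs'def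
    have hmem' : ∀ p ∈ s', p.1 ∈ γ ∧ p.2 ∈ γ ∧ p.1 ≠ p.2 := by
      intro p hp
      rw [hs'def, Finset.mem_filter] at hp
      exact ⟨hp.2.1.1, hp.2.1.2, hp.2.2⟩
    have hstep1 : ∑ p ∈ s, (γ ×ˢ γ).indicator (fun p => ENNReal.ofReal (Psi φ p.1 p.2)) p
        = ∑ p ∈ s', (γ ×ˢ γ).indicator (fun p => ENNReal.ofReal (Psi φ p.1 p.2)) p := by
      refine (Finset.sum_subset (Finset.filter_subset _ _) ?_).symm
      intro p hps hps'
      have hnp : ¬(p ∈ γ ×ˢ γ ∧ p.1 ≠ p.2) := fun h => hps' (Finset.mem_filter.2 ⟨hps, h⟩)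
      by_cases hpγ : p ∈ γ ×ˢ γ
      · have hpd : p.1 = p.2 := by
          by_contra hne
          exact hnp ⟨hpγ, hne⟩
        rw [Set.indicator_of_mem hpγ]
        simp [Psi, hpd]
      · exact Set.indicator_of_notMem hpγ _
    have hstep2 : ∑ p ∈ s', (γ ×ˢ γ).indicator (fun p => ENNReal.ofReal (Psi φ p.1 p.2)) p
        = ENNReal.ofReal (∑ p ∈ s', Psi φ p.1 p.2) := by
      rw [ENNReal.ofReal_sum_of_nonneg (fun p _ => psi_nonneg hφpos _ _)]
      apply Finset.sum_congr rfl
      intro p hp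
      rw [Set.indicator_of_mem]
      rw [hs'def, Finset.mem_filter] at hp
      exact hp.2.1
    rw [hstep1, hstep2]
    apply ENNReal.ofReal_le_ofReal
    set pts : Finset (EuclideanSpace ℝ (Fin d)) :=
      s'.image Prod.fst ∪ s'.image Prod.snd with hptsdef
    have hp1pts : ∀ p ∈ s', p.1 ∈ pts :=
      fun p hp => Finset.mem_union_left _ (Finset.mem_image_of_mem Prod.fst hp)
    have hp2pts : ∀ p ∈ s', p.2 ∈ pts :=
      fun p hp => Finset.mem_union_right _ (Finset.mem_image_of_mem Prod.snd hp)
    have hptsγ : ∀ x ∈ pts, x ∈ γ := by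
      intro x hx
      rw [hptsdef, Finset.mem_union] at hx
      rcases hx with hx | hx
      · obtain ⟨p, hp, rfl⟩ := Finset.mem_image.1 hx
        exact (hmem' p hp).1
      · obtain ⟨p, hp, rfl⟩ := Finset.mem_image.1 hx
        exact (hmem' p hp).2.1
    have hev1 : ∀ᶠ k in atTop, ∀ x ∈ pts, FF x k ∈ u (ψ k) := by
      rw [Filter.eventually_all_finset]
      intro x hx
      exact (hFF x (hptsγ x hx)).1
    have hev2 : ∀ᶠ k in atTop, ∀ x ∈ pts, ∀ y ∈ pts, x ≠ y → FF x k ≠ FF y k := by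
      rw [Filter.eventually_all_finset]
      intro x hx
      rw [Filter.eventually_all_finset]
      intro y hy
      by_cases hxy : x = y
      · filter_upwards with k h
        exact absurd rfl (hxy ▸ h)
      · have hx' := (hFF x (hptsγ x hx)).2
        have hy' := (hFF y (hptsγ y hy)).2
        have hd0 : dist x y ≠ 0 := by simpa [dist_eq_zero] using hxy
        filter_upwards [(hx'.dist hy').eventually_ne hd0] with k hk
        intro _ heq
        exact hk (by rw [heq, dist_self])
    have hbound : ∀ᶠ k in atTop, ∑ p ∈ s', Psi φ (FF p.1 k) (FF p.2 k) ≤ c := by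
      filter_upwards [hev1, hev2] with k h1 h2
      have hmemk : ∀ p ∈ s', (FF p.1 k, FF p.2 k) ∈ u (ψ k) ×ˢ u (ψ k) :=
        fun p hp => ⟨h1 p.1 (hp1pts p hp), h1 p.2 (hp2pts p hp)⟩
      have hinj : ∀ p ∈ s', ∀ p' ∈ s',
          (FF p.1 k, FF p.2 k) = (FF p'.1 k, FF p'.2 k) → p = p' := by
        intro p hp p' hp' heq
        simp only [Prod.mk.injEq] at heq
        have hq1 : p.1 = p'.1 := by
          by_contra hne
          exact h2 p.1 (hp1pts p hp) p'.1 (hp1pts p' hp') hne heq.1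
        have hq2 : p.2 = p'.2 := by
          by_contra hne
          exact h2 p.2 (hp2pts p hp) p'.2 (hp2pts p' hp') hne heq.2
        exact Prod.ext hq1 hq2
      have key : ENNReal.ofReal (∑ p ∈ s', Psi φ (FF p.1 k) (FF p.2 k))
          ≤ ENNReal.ofReal c := by
        rw [ENNReal.ofReal_sum_of_nonneg (fun p _ => psi_nonneg hφpos _ _)]
        have heq : ∑ p ∈ s', ENNReal.ofReal (Psi φ (FF p.1 k) (FF p.2 k))
            = ∑ r ∈ s'.image (fun p : EuclideanSpace ℝ (Fin d) × EuclideanSpace ℝ (Fin d) =>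
                (FF p.1 k, FF p.2 k)),
              (u (ψ k) ×ˢ u (ψ k)).indicator (fun p => ENNReal.ofReal (Psi φ p.1 p.2)) r := by
          rw [Finset.sum_image hinj]
          apply Finset.sum_congr rfl
          intro p hp
          rw [Set.indicator_of_mem (hmemk p hp)]
        rw [heq]
        calc ∑ r ∈ s'.image (fun p : EuclideanSpace ℝ (Fin d) × EuclideanSpace ℝ (Fin d) =>
                (FF p.1 k, FF p.2 k)),
              (u (ψ k) ×ˢ u (ψ k)).indicator (fun p => ENNReal.ofReal (Psi φ p.1 p.2)) r
            ≤ ∑' r : EuclideanSpace ℝ (Fin d) × EuclideanSpace ℝ (Fin d),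
              (u (ψ k) ×ˢ u (ψ k)).indicator (fun p => ENNReal.ofReal (Psi φ p.1 p.2)) r :=
              ENNReal.sum_le_tsum _
          _ = pairPsi φ (u (ψ k)) := (pairPsi_eq_tsum_indicator _ _).symm
          _ ≤ ENNReal.ofReal c := (hu (ψ k)).2
      exact (ENNReal.ofReal_le_ofReal_iff hc.le).1 key
    have htend : Tendsto (fun k => ∑ p ∈ s', Psi φ (FF p.1 k) (FF p.2 k)) atTop
        (𝓝 (∑ p ∈ s', Psi φ p.1 p.2)) := by
      apply tendsto_finset_sum
      intro p hp
      obtain ⟨h1, h2, h3⟩ := hmem' p hp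
      exact psi_tendsto hφc (hFF p.1 h1).2 (hFF p.2 h2).2 h3
    exact le_of_tendsto htend hbound
  have hvague : VagueTendsto (u ∘ ψ) γ := by
    intro f hf hsupp
    obtain ⟨R, hR⟩ := hsupp.isBounded.subset_closedBall 0
    obtain ⟨n, hn⟩ := exists_nat_gt R
    have hsupp' : Function.support f ⊆ ball (0 : EuclideanSpace ℝ (Fin d)) (n : ℝ) := by
      intro x hx
      have hxR := hR (subset_tsupport f hx)
      rw [mem_closedBall] at hxR
      rw [mem_ball]
      linarith
    have hqinj : ∀ j ∈ Finset.range (m n), ∀ j' ∈ Finset.range (m n),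
        q n j = q n j' → j = j' := by
      intro j hj j' hj' heq
      by_contra hne
      have hsep := hqsep n j j' (Finset.mem_range.1 hj) (Finset.mem_range.1 hj') hne
      rw [heq, dist_self] at hsep
      exact absurd hsep (not_le.2 (hδpos n))
    have hγG : γ ∩ Function.support f
        = ↑((Finset.range (m n)).image (q n)) ∩ Function.support f := by
      ext x
      constructor
      · rintro ⟨hxγ, hxs⟩
        have hxb : x ∈ ball (0 : EuclideanSpace ℝ (Fin d)) (n : ℝ) := hsupp' hxs
        obtain ⟨j, hj, rfl⟩ := hsub n ⟨hxγ, hxb⟩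
        exact ⟨Finset.mem_coe.2 (Finset.mem_image.2 ⟨j, Finset.mem_range.2 hj, rfl⟩), hxs⟩
      · rintro ⟨hxG, hxs⟩
        obtain ⟨j, hj, rfl⟩ := Finset.mem_image.1 (Finset.mem_coe.1 hxG)
        exact ⟨hqmem n j (Finset.mem_range.1 hj), hxs⟩
    have hlim : ∑ᶠ x ∈ γ, f x = ∑ j ∈ Finset.range (m n), f (q n j) := by
      rw [finsum_mem_eq_sum_of_inter_support_eq f hγG, Finset.sum_image hqinj]
    have hev : ∀ᶠ k in atTop, (fun k => ∑ᶠ x ∈ (u ∘ ψ) k, f x) k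
        = (fun k => ∑ j ∈ Finset.range (m n),
            f ((e (ψ k) n).2 j : EuclideanSpace ℝ (Fin d))) k := by
      filter_upwards [hcard_ev n] with k hk
      have hUF : u (ψ k) ∩ Function.support f = ↑(F (ψ k) n) ∩ Function.support f := by
        ext x
        constructor
        · rintro ⟨hxu, hxs⟩
          refine ⟨Finset.mem_coe.2 ((hFmem _ _ _).2 ⟨hxu, ?_⟩), hxs⟩
          exact ball_subset_closedBall (hsupp' hxs)
        · rintro ⟨hxF, hxs⟩
          exact ⟨((hFmem _ _ _).1 (Finset.mem_coe.1 hxF)).1, hxs⟩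
      show ∑ᶠ x ∈ u (ψ k), f x = _
      rw [finsum_mem_eq_sum_of_inter_support_eq f hUF, he5 (ψ k) n f, hk]
    rw [hlim]
    have htend : Tendsto (fun k => ∑ j ∈ Finset.range (m n),
        f ((e (ψ k) n).2 j : EuclideanSpace ℝ (Fin d))) atTop
        (𝓝 (∑ j ∈ Finset.range (m n), f (q n j))) := by
      apply tendsto_finset_sum
      intro j _
      exact (hf.tendsto (q n j)).comp (hq n j)
    exact Filter.Tendsto.congr' (by filter_upwards [hev] with k hk; exact hk.symm) htend
  exact ⟨ψ, hψ, γ, hconf, hpair, hvague⟩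

end
end

section
/- Let d ∈ ℕ, d ≥ 1, let (γ_k) be a sequence of configurations over ℝ^d converging vaguely to a configuration γ. Then for every continuous compactly supported function f : ℝ^d × ℝ^d → ℝ, the double sums converge: ∑_{(x, y) ∈ γ_k × γ_k} f(x, y) → ∑_{(x, y) ∈ γ × γ} f(x, y) as k → ∞. In other words, the map γ ↦ ⟨γ × γ, f⟩ is sequentially continuous with respect to vague convergence. -/
open Filter Topology Metric Set

noncomputable section

/-- Explicit bump functions in a proper metric space. -/
lemma exists_bump_s5 {X : Type*} [MetricSpace X] [ProperSpace X] (c : X) {r₁ r₂ : ℝ}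
    (h : r₁ < r₂) :
    ∃ b : X → ℝ, Continuous b ∧ HasCompactSupport b ∧ (∀ x, 0 ≤ b x) ∧ (∀ x, b x ≤ 1) ∧
      (∀ x, dist x c ≤ r₁ → b x = 1) ∧ (∀ x, b x ≠ 0 → dist x c < r₂) := by
  have hpos : (0 : ℝ) < r₂ - r₁ := sub_pos.2 h
  set b : X → ℝ := fun x => max 0 (min 1 ((r₂ - dist x c) / (r₂ - r₁))) with hb
  have hcont : Continuous b := by
    apply continuous_const.max
    exact continuous_const.min ((continuous_const.sub (continuous_id.dist continuous_const)).div_const _)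
  have h0 : ∀ x, 0 ≤ b x := fun x => le_max_left _ _
  have h1 : ∀ x, b x ≤ 1 := fun x => max_le zero_le_one (min_le_left _ _)
  have heq1 : ∀ x, dist x c ≤ r₁ → b x = 1 := by
    intro x hx
    have h1le : (1 : ℝ) ≤ (r₂ - dist x c) / (r₂ - r₁) := by
      rw [le_div_iff₀ hpos]; linarith
    rw [hb]
    simp only [min_eq_left h1le, max_eq_right zero_le_one]
  have hzero : ∀ x, r₂ ≤ dist x c → b x = 0 := by
    intro x hx
    have hle : (r₂ - dist x c) / (r₂ - r₁) ≤ 0 := div_nonpos_of_nonpos_of_nonneg (by linarith) hpos.le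
    rw [hb]
    exact max_eq_left ((min_le_right _ _).trans hle)
  have hsupp : ∀ x, b x ≠ 0 → dist x c < r₂ := by
    intro x hx
    by_contra hcon
    exact hx (hzero x (not_lt.mp hcon))
  refine ⟨b, hcont, ?_, h0, h1, heq1, hsupp⟩
  exact HasCompactSupport.intro (isCompact_closedBall c r₂)
    (fun x hx => hzero x (le_of_lt (by simpa [mem_closedBall] using hx)))

/-- The map `γ ↦ ⟨γ × γ, f⟩` is sequentially continuous with respect to vague convergence,
for every continuous compactly supported `f : ℝ^d × ℝ^d → ℝ`. -/
theorem pair_sum_seq_continuous_of_vague_tendsto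
    (d : ℕ) (hd : 1 ≤ d)
    (γ : ℕ → Set (EuclideanSpace ℝ (Fin d))) (γ' : Set (EuclideanSpace ℝ (Fin d)))
    (hγ : ∀ k, IsConfiguration (γ k)) (hγ' : IsConfiguration γ')
    (hconv : VagueTendsto γ γ')
    (f : EuclideanSpace ℝ (Fin d) × EuclideanSpace ℝ (Fin d) → ℝ)
    (hf : Continuous f) (hfc : HasCompactSupport f) :
    Tendsto (fun k => ∑ᶠ p ∈ (γ k ×ˢ γ k), f p) atTop (𝓝 (∑ᶠ p ∈ (γ' ×ˢ γ'), f p)) := by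
  classical
  -- a radius R with supp f ⊆ B_R × B_R
  have hK : IsCompact (tsupport f) := hfc
  obtain ⟨R₀, hR₀⟩ := hK.isBounded.subset_closedBall (0 : EuclideanSpace ℝ (Fin d) × EuclideanSpace ℝ (Fin d))
  set R : ℝ := max R₀ 1 with hR
  have hR1 : (1 : ℝ) ≤ R := le_max_right _ _
  have hfK : ∀ p : EuclideanSpace ℝ (Fin d) × EuclideanSpace ℝ (Fin d), f p ≠ 0 → dist p.1 0 ≤ R ∧ dist p.2 0 ≤ R := by
    intro p hp
    have hsub : tsupport f ⊆ closedBall (0 : EuclideanSpace ℝ (Fin d) × EuclideanSpace ℝ (Fin d)) R :=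
      hR₀.trans (closedBall_subset_closedBall (le_max_left _ _))
    have h := mem_closedBall.mp (hsub (subset_tsupport f (Function.mem_support.mpr hp)))
    rw [Prod.dist_eq] at h
    simp only [Prod.fst_zero, Prod.snd_zero] at h
    exact ⟨le_trans (le_max_left _ _) h, le_trans (le_max_right _ _) h⟩
  -- the cutoff function χ
  obtain ⟨χ, hχcont, hχcs, hχ0, hχle1, hχeq, hχsupp⟩ :=
    exists_bump_s5 (0 : EuclideanSpace ℝ (Fin d)) (show R + 1 < R + 2 by linarith)
  have hBcomp : IsCompact (closedBall (0 : EuclideanSpace ℝ (Fin d)) (R + 1)) := isCompact_closedBall _ _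
  -- counting bound via χ
  have hcard : ∀ (s : Set (EuclideanSpace ℝ (Fin d))) (hsfin : (s ∩ closedBall (0 : EuclideanSpace ℝ (Fin d)) (R + 1)).Finite),
      IsConfiguration s → (hsfin.toFinset.card : ℝ) ≤ ∑ᶠ x ∈ s, χ x := by
    intro s hsfin hs
    have hsfin2 : (s ∩ closedBall (0 : EuclideanSpace ℝ (Fin d)) (R + 2)).Finite := hs _ (isCompact_closedBall _ _)
    have h1 : ∑ᶠ x ∈ s, χ x = ∑ x ∈ hsfin2.toFinset, χ x := by
      refine finsum_mem_eq_sum_of_subset _ ?_ ?_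
      · rintro x ⟨hxs, hxsup⟩
        exact Finset.mem_coe.mpr (hsfin2.mem_toFinset.mpr
          ⟨hxs, mem_closedBall.mpr (le_of_lt (hχsupp x hxsup))⟩)
      · intro x hx
        exact (hsfin2.mem_toFinset.mp (Finset.mem_coe.mp hx)).1
    rw [h1]
    calc (hsfin.toFinset.card : ℝ) = ∑ _x ∈ hsfin.toFinset, (1 : ℝ) := by simp
      _ = ∑ x ∈ hsfin.toFinset, χ x := Finset.sum_congr rfl
          (fun x hx => (hχeq x (mem_closedBall.mp (hsfin.mem_toFinset.mp hx).2)).symm)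
      _ ≤ ∑ x ∈ hsfin2.toFinset, χ x := by
          refine Finset.sum_le_sum_of_subset_of_nonneg ?_ (fun x _ _ => hχ0 x)
          intro x hx
          obtain ⟨hxs, hxB⟩ := hsfin.mem_toFinset.mp hx
          exact hsfin2.mem_toFinset.mpr ⟨hxs, closedBall_subset_closedBall (by linarith) hxB⟩
  -- the uniform bound M
  have hχtend := hconv χ hχcont hχcs
  obtain ⟨M₀, hM₀⟩ := hχtend.bddAbove_range
  set M : ℝ := max M₀ (∑ᶠ x ∈ γ', χ x) with hM
  have hMk : ∀ k, ∑ᶠ x ∈ γ k, χ x ≤ M :=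
    fun k => le_trans (hM₀ ⟨k, rfl⟩) (le_max_left _ _)
  have hM' : ∑ᶠ x ∈ γ', χ x ≤ M := le_max_right _ _
  have hMnn : (0 : ℝ) ≤ M := by
    have := hcard γ' (hγ' _ hBcomp) hγ'
    have h0 : (0:ℝ) ≤ ((hγ' _ hBcomp).toFinset.card : ℝ) := Nat.cast_nonneg _
    linarith [hM']
  -- finsum-to-finset-sum conversions
  have hsum_one : ∀ (s : Set (EuclideanSpace ℝ (Fin d))) (hsfin : (s ∩ closedBall (0 : EuclideanSpace ℝ (Fin d)) (R + 1)).Finite)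
      (g : EuclideanSpace ℝ (Fin d) → ℝ), (∀ x, g x ≠ 0 → x ∈ closedBall (0 : EuclideanSpace ℝ (Fin d)) (R + 1)) →
      ∑ᶠ x ∈ s, g x = ∑ x ∈ hsfin.toFinset, g x := by
    intro s hsfin g hg
    refine finsum_mem_eq_sum_of_subset _ ?_ ?_
    · rintro x ⟨hxs, hxsup⟩
      exact Finset.mem_coe.mpr (hsfin.mem_toFinset.mpr ⟨hxs, hg x hxsup⟩)
    · intro x hx
      exact (hsfin.mem_toFinset.mp (Finset.mem_coe.mp hx)).1
  have hsum_pair : ∀ (s : Set (EuclideanSpace ℝ (Fin d))) (hsfin : (s ∩ closedBall (0 : EuclideanSpace ℝ (Fin d)) (R + 1)).Finite)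
      (G : EuclideanSpace ℝ (Fin d) × EuclideanSpace ℝ (Fin d) → ℝ),
      (∀ p : EuclideanSpace ℝ (Fin d) × EuclideanSpace ℝ (Fin d), G p ≠ 0 → p.1 ∈ closedBall (0 : EuclideanSpace ℝ (Fin d)) (R + 1) ∧ p.2 ∈ closedBall (0 : EuclideanSpace ℝ (Fin d)) (R + 1)) →
      ∑ᶠ p ∈ s ×ˢ s, G p = ∑ p ∈ hsfin.toFinset ×ˢ hsfin.toFinset, G p := by
    intro s hsfin G hG
    refine finsum_mem_eq_sum_of_subset _ ?_ ?_
    · rintro p ⟨hps, hpsup⟩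
      have hB := hG p hpsup
      refine Finset.mem_coe.mpr (Finset.mem_product.mpr ⟨?_, ?_⟩)
      · exact hsfin.mem_toFinset.mpr ⟨hps.1, hB.1⟩
      · exact hsfin.mem_toFinset.mpr ⟨hps.2, hB.2⟩
    · intro p hp
      have hp' := Finset.mem_product.mp (Finset.mem_coe.mp hp)
      exact ⟨(hsfin.mem_toFinset.mp hp'.1).1, (hsfin.mem_toFinset.mp hp'.2).1⟩
  have hfsuppB : ∀ p : EuclideanSpace ℝ (Fin d) × EuclideanSpace ℝ (Fin d), f p ≠ 0 →
      p.1 ∈ closedBall (0 : EuclideanSpace ℝ (Fin d)) (R + 1) ∧ p.2 ∈ closedBall (0 : EuclideanSpace ℝ (Fin d)) (R + 1) := by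
    intro p hp
    obtain ⟨h1, h2⟩ := hfK p hp
    exact ⟨mem_closedBall.mpr (by linarith), mem_closedBall.mpr (by linarith)⟩
  -- now the ε-argument
  rw [Metric.tendsto_atTop]
  intro ε hε
  set ε₁ : ℝ := ε / (4 * (M ^ 2 + 1)) with hε₁def
  have hM21 : (0 : ℝ) < M ^ 2 + 1 := by positivity
  have hε₁ : 0 < ε₁ := by positivity
  have hε₁M : ε₁ * M ^ 2 ≤ ε / 4 := by
    rw [hε₁def, div_mul_eq_mul_div, div_le_div_iff₀ (by positivity) (by norm_num)]
    nlinarith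
  -- uniform continuity
  have hfu : UniformContinuous f :=
    hf.uniformContinuous_of_tendsto_cocompact hfc.is_zero_at_infty
  obtain ⟨δ₀, hδ₀, hδf⟩ := Metric.uniformContinuous_iff.mp hfu ε₁ hε₁
  set δ : ℝ := min δ₀ 1 with hδdef
  have hδpos : 0 < δ := lt_min hδ₀ one_pos
  have hδ1 : δ ≤ 1 := min_le_right _ _
  have hδδ₀ : δ ≤ δ₀ := min_le_left _ _
  -- finite cover of B_R by δ/2-balls
  obtain ⟨t0, ht0sub, ht0fin, ht0cov⟩ :=
    (isCompact_closedBall (0 : EuclideanSpace ℝ (Fin d)) R).finite_cover_balls (show (0 : ℝ) < δ / 2 by positivity)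
  set t : Finset (EuclideanSpace ℝ (Fin d)) := ht0fin.toFinset with ht
  -- the bumps
  choose φ hφc hφcs hφ0 hφle1 hφeq hφsupp using fun c : EuclideanSpace ℝ (Fin d) => exists_bump_s5 c (half_lt_self hδpos)
  -- partition of unity
  set ψ : EuclideanSpace ℝ (Fin d) → EuclideanSpace ℝ (Fin d) → ℝ := fun c x => φ c x / max 1 (∑ c' ∈ t, φ c' x) with hψdef
  have hDcont : Continuous (fun x => max 1 (∑ c' ∈ t, φ c' x)) :=
    continuous_const.max (continuous_finset_sum _ fun c _ => hφc c)
  have hD1 : ∀ x : EuclideanSpace ℝ (Fin d), (1 : ℝ) ≤ max 1 (∑ c' ∈ t, φ c' x) := fun x => le_max_left _ _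
  have hDpos : ∀ x : EuclideanSpace ℝ (Fin d), (0 : ℝ) < max 1 (∑ c' ∈ t, φ c' x) :=
    fun x => lt_of_lt_of_le one_pos (hD1 x)
  have hψc : ∀ c, Continuous (ψ c) :=
    fun c => (hφc c).div hDcont (fun x => (hDpos x).ne')
  have hψ0 : ∀ c x, 0 ≤ ψ c x := fun c x => div_nonneg (hφ0 c x) (hDpos x).le
  have hψne : ∀ c x, ψ c x ≠ 0 → φ c x ≠ 0 := by
    intro c x h hc
    exact h (by rw [hψdef]; simp [hc])
  have hψcs : ∀ c, HasCompactSupport (ψ c) := by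
    intro c
    refine HasCompactSupport.intro (isCompact_closedBall c δ) (fun x hx => ?_)
    by_contra hne
    exact hx (mem_closedBall.mpr (le_of_lt (hφsupp c x (hψne c x hne))))
  have hψsum_le : ∀ x, ∑ c ∈ t, ψ c x ≤ 1 := by
    intro x
    rw [hψdef, ← Finset.sum_div]
    exact (div_le_one (hDpos x)).mpr (le_max_right _ _)
  have hψsum_eq : ∀ x, dist x 0 ≤ R → ∑ c ∈ t, ψ c x = 1 := by
    intro x hx
    obtain ⟨c, hct0, hcball⟩ := Set.mem_iUnion₂.mp (ht0cov (mem_closedBall.mpr hx))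
    have hφc1 : φ c x = 1 := hφeq c x (le_of_lt (mem_ball.mp hcball))
    have hS1 : (1 : ℝ) ≤ ∑ c' ∈ t, φ c' x := by
      calc (1 : ℝ) = φ c x := hφc1.symm
        _ ≤ ∑ c' ∈ t, φ c' x :=
          Finset.single_le_sum (fun c' _ => hφ0 c' x) (ht0fin.mem_toFinset.mpr hct0)
    rw [hψdef]
    simp only
    rw [← Finset.sum_div, max_eq_right hS1, div_self (by linarith)]
  -- the pointwise approximation estimate
  have hpt : ∀ p : EuclideanSpace ℝ (Fin d) × EuclideanSpace ℝ (Fin d), |f p - ∑ c ∈ t, ψ c p.1 * f (c, p.2)| ≤ ε₁ := by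
    rintro ⟨x, y⟩
    have hsplit : f (x, y) - ∑ c ∈ t, ψ c x * f (c, y)
        = (1 - ∑ c ∈ t, ψ c x) * f (x, y)
          + ∑ c ∈ t, ψ c x * (f (x, y) - f (c, y)) := by
      simp only [mul_sub, Finset.sum_sub_distrib, sub_mul, one_mul, ← Finset.sum_mul]
      ring
    have hfirst : (1 - ∑ c ∈ t, ψ c x) * f (x, y) = 0 := by
      by_cases hx : dist x 0 ≤ R
      · rw [hψsum_eq x hx]; ring
      · have hf0 : f (x, y) = 0 := by
          by_contra hne
          exact hx (hfK (x, y) hne).1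
        rw [hf0, mul_zero]
    rw [hsplit, hfirst, zero_add]
    calc |∑ c ∈ t, ψ c x * (f (x, y) - f (c, y))|
        ≤ ∑ c ∈ t, |ψ c x * (f (x, y) - f (c, y))| := Finset.abs_sum_le_sum_abs _ _
      _ ≤ ∑ c ∈ t, ψ c x * ε₁ := by
          refine Finset.sum_le_sum fun c _ => ?_
          rw [abs_mul, abs_of_nonneg (hψ0 c x)]
          by_cases hzero : ψ c x = 0
          · simp [hzero]
          · have hdist : dist x c < δ := hφsupp c x (hψne c x hzero)
            have hdp : dist ((x, y) : EuclideanSpace ℝ (Fin d) × EuclideanSpace ℝ (Fin d)) (c, y) < δ₀ := by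
              rw [Prod.dist_eq]
              exact max_lt (lt_of_lt_of_le hdist hδδ₀) (by simpa [dist_self] using hδ₀)
            have hdf := hδf hdp
            rw [Real.dist_eq] at hdf
            exact mul_le_mul_of_nonneg_left hdf.le (hψ0 c x)
      _ = (∑ c ∈ t, ψ c x) * ε₁ := (Finset.sum_mul _ _ _).symm
      _ ≤ 1 * ε₁ := mul_le_mul_of_nonneg_right (hψsum_le x) hε₁.le
      _ = ε₁ := one_mul _
  -- support control for the approximant
  have hFsupp : ∀ p : EuclideanSpace ℝ (Fin d) × EuclideanSpace ℝ (Fin d), (∑ c ∈ t, ψ c p.1 * f (c, p.2)) ≠ 0 →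
      p.1 ∈ closedBall (0 : EuclideanSpace ℝ (Fin d)) (R + 1) ∧ p.2 ∈ closedBall (0 : EuclideanSpace ℝ (Fin d)) (R + 1) := by
    intro p hp
    obtain ⟨c, hct, hcne⟩ := Finset.exists_ne_zero_of_sum_ne_zero hp
    have hψc0 : ψ c p.1 ≠ 0 := fun h => hcne (by rw [h, zero_mul])
    have hfc0 : f (c, p.2) ≠ 0 := fun h => hcne (by rw [h, mul_zero])
    constructor
    · have h1 : dist p.1 c < δ := hφsupp c p.1 (hψne c p.1 hψc0)
      have h2 : dist c 0 ≤ R := mem_closedBall.mp (ht0sub (ht0fin.mem_toFinset.mp hct))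
      refine mem_closedBall.mpr ?_
      calc dist p.1 0 ≤ dist p.1 c + dist c 0 := dist_triangle _ _ _
        _ ≤ R + 1 := by linarith
    · have h2 := (hfK (c, p.2) hfc0).2
      exact mem_closedBall.mpr (by linarith)
  -- compact support of the slices
  have hhc : ∀ c : EuclideanSpace ℝ (Fin d), Continuous (fun y : EuclideanSpace ℝ (Fin d) => f (c, y)) :=
    fun c => hf.comp (continuous_const.prodMk continuous_id)
  have hhcs : ∀ c : EuclideanSpace ℝ (Fin d), HasCompactSupport (fun y : EuclideanSpace ℝ (Fin d) => f (c, y)) := by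
    intro c
    refine HasCompactSupport.intro (isCompact_closedBall (0 : EuclideanSpace ℝ (Fin d)) R) (fun y hy => ?_)
    by_contra hne
    exact hy (mem_closedBall.mpr (hfK (c, y) hne).2)
  -- the main generic estimate
  have hmain : ∀ (s : Set (EuclideanSpace ℝ (Fin d))), IsConfiguration s → (∑ᶠ x ∈ s, χ x) ≤ M →
      |(∑ᶠ p ∈ s ×ˢ s, f p) - ∑ c ∈ t, (∑ᶠ x ∈ s, ψ c x) * (∑ᶠ y ∈ s, f (c, y))| ≤ ε / 4 := by
    intro s hs hsM
    have hsfin : (s ∩ closedBall (0 : EuclideanSpace ℝ (Fin d)) (R + 1)).Finite := hs _ hBcomp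
    have hcardM : (hsfin.toFinset.card : ℝ) ≤ M := (hcard s hsfin hs).trans hsM
    have h1 : ∑ᶠ p ∈ s ×ˢ s, f p = ∑ p ∈ hsfin.toFinset ×ˢ hsfin.toFinset, f p :=
      hsum_pair s hsfin f hfsuppB
    have h2 : ∀ c ∈ t, (∑ᶠ x ∈ s, ψ c x) = ∑ x ∈ hsfin.toFinset, ψ c x := by
      intro c hct
      refine hsum_one s hsfin (ψ c) (fun x hx => ?_)
      have hd : dist x c < δ := hφsupp c x (hψne c x hx)
      have hc0 : dist c 0 ≤ R := mem_closedBall.mp (ht0sub (ht0fin.mem_toFinset.mp hct))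
      refine mem_closedBall.mpr ?_
      calc dist x 0 ≤ dist x c + dist c 0 := dist_triangle _ _ _
        _ ≤ R + 1 := by linarith
    have h3 : ∀ c ∈ t, (∑ᶠ y ∈ s, f (c, y)) = ∑ y ∈ hsfin.toFinset, f (c, y) := by
      intro c _
      refine hsum_one s hsfin _ (fun y hy => ?_)
      exact mem_closedBall.mpr (by linarith [(hfK (c, y) hy).2])
    have h4 : ∑ c ∈ t, (∑ x ∈ hsfin.toFinset, ψ c x) * (∑ y ∈ hsfin.toFinset, f (c, y))
        = ∑ p ∈ hsfin.toFinset ×ˢ hsfin.toFinset, ∑ c ∈ t, ψ c p.1 * f (c, p.2) := by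
      calc ∑ c ∈ t, (∑ x ∈ hsfin.toFinset, ψ c x) * (∑ y ∈ hsfin.toFinset, f (c, y))
          = ∑ c ∈ t, ∑ x ∈ hsfin.toFinset, ∑ y ∈ hsfin.toFinset, ψ c x * f (c, y) := by
            exact Finset.sum_congr rfl fun c _ => Finset.sum_mul_sum _ _ _ _
        _ = ∑ x ∈ hsfin.toFinset, ∑ y ∈ hsfin.toFinset, ∑ c ∈ t, ψ c x * f (c, y) := by
            rw [Finset.sum_comm]
            exact Finset.sum_congr rfl fun x _ => Finset.sum_comm
        _ = ∑ p ∈ hsfin.toFinset ×ˢ hsfin.toFinset, ∑ c ∈ t, ψ c p.1 * f (c, p.2) := by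
            rw [Finset.sum_product]
    have h5 : ∑ c ∈ t, (∑ᶠ x ∈ s, ψ c x) * (∑ᶠ y ∈ s, f (c, y))
        = ∑ p ∈ hsfin.toFinset ×ˢ hsfin.toFinset, ∑ c ∈ t, ψ c p.1 * f (c, p.2) := by
      rw [← h4]
      exact Finset.sum_congr rfl fun c hc => by rw [h2 c hc, h3 c hc]
    rw [h1, h5]
    have hcardnn : (0 : ℝ) ≤ (hsfin.toFinset.card : ℝ) := Nat.cast_nonneg _
    calc |(∑ p ∈ hsfin.toFinset ×ˢ hsfin.toFinset, f p)
          - ∑ p ∈ hsfin.toFinset ×ˢ hsfin.toFinset, ∑ c ∈ t, ψ c p.1 * f (c, p.2)|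
        = |∑ p ∈ hsfin.toFinset ×ˢ hsfin.toFinset, (f p - ∑ c ∈ t, ψ c p.1 * f (c, p.2))| := by
          rw [Finset.sum_sub_distrib]
      _ ≤ ∑ p ∈ hsfin.toFinset ×ˢ hsfin.toFinset, |f p - ∑ c ∈ t, ψ c p.1 * f (c, p.2)| :=
          Finset.abs_sum_le_sum_abs _ _
      _ ≤ ∑ _p ∈ hsfin.toFinset ×ˢ hsfin.toFinset, ε₁ :=
          Finset.sum_le_sum fun p _ => hpt p
      _ = ((hsfin.toFinset ×ˢ hsfin.toFinset).card : ℝ) * ε₁ := by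
          rw [Finset.sum_const, nsmul_eq_mul]
      _ = (hsfin.toFinset.card : ℝ) * (hsfin.toFinset.card : ℝ) * ε₁ := by
          rw [Finset.card_product]; push_cast; ring
      _ ≤ M * M * ε₁ := mul_le_mul_of_nonneg_right (mul_le_mul hcardM hcardM hcardnn hMnn) hε₁.le
      _ = ε₁ * M ^ 2 := by ring
      _ ≤ ε / 4 := hε₁M
  -- the tendsto of the tensor sums
  have htend : Tendsto (fun k => ∑ c ∈ t, (∑ᶠ x ∈ γ k, ψ c x) * (∑ᶠ y ∈ γ k, f (c, y)))
      atTop (𝓝 (∑ c ∈ t, (∑ᶠ x ∈ γ', ψ c x) * (∑ᶠ y ∈ γ', f (c, y)))) := by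
    refine tendsto_finset_sum _ fun c _ => Tendsto.mul ?_ ?_
    · exact hconv (ψ c) (hψc c) (hψcs c)
    · exact hconv (fun y => f (c, y)) (hhc c) (hhcs c)
  obtain ⟨N, hN⟩ := Metric.tendsto_atTop.mp htend (ε / 4) (by linarith)
  refine ⟨N, fun k hk => ?_⟩
  have e1 := hmain (γ k) (hγ k) (hMk k)
  have e2 := hmain γ' hγ' hM'
  have e3 : |(∑ c ∈ t, (∑ᶠ x ∈ γ k, ψ c x) * (∑ᶠ y ∈ γ k, f (c, y)))
      - ∑ c ∈ t, (∑ᶠ x ∈ γ', ψ c x) * (∑ᶠ y ∈ γ', f (c, y))| < ε / 4 := by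
    simpa [Real.dist_eq] using hN k hk
  rw [Real.dist_eq]
  set A := ∑ᶠ p ∈ γ k ×ˢ γ k, f p
  set L := ∑ᶠ p ∈ γ' ×ˢ γ', f p
  set Pk := ∑ c ∈ t, (∑ᶠ x ∈ γ k, ψ c x) * (∑ᶠ y ∈ γ k, f (c, y))
  set P' := ∑ c ∈ t, (∑ᶠ x ∈ γ', ψ c x) * (∑ᶠ y ∈ γ', f (c, y))
  have habs1 : |A - L| ≤ |A - Pk| + |Pk - P'| + |P' - L| := by
    calc |A - L| ≤ |A - Pk| + |Pk - L| := abs_sub_le _ _ _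
      _ ≤ |A - Pk| + (|Pk - P'| + |P' - L|) := by linarith [abs_sub_le Pk P' L]
      _ = |A - Pk| + |Pk - P'| + |P' - L| := by ring
  have habs2 : |P' - L| = |L - P'| := abs_sub_comm _ _
  linarith
end
end

section
/- Let d ∈ ℕ, d ≥ 1. The function dist on Γ_0(ℝ^d) is a metric on the set of finite subsets of ℝ^d: dist(ζ, η) ≥ 0 with equality iff ζ = η, dist(ζ, η) = dist(η, ζ), and dist(ζ, η) ≤ dist(ζ, ξ) + dist(ξ, η) for all finite subsets ζ, η, ξ of ℝ^d. -/
open Filter Topology Metric Set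

noncomputable section

/-- `d_Eucl(ζ, η)`: the infimum over bijections `e : ζ → η` of
`(∑_{x ∈ ζ} |x − e(x)|²)^{1/2}`. -/
def dEucl {d : ℕ} (ζ η : Set (EuclideanSpace ℝ (Fin d))) : ℝ :=
  sInf {r | ∃ e : EuclideanSpace ℝ (Fin d) → EuclideanSpace ℝ (Fin d),
    Set.BijOn e ζ η ∧ r = Real.sqrt (∑ᶠ x ∈ ζ, ‖x - e x‖ ^ 2)}

/-- The metric `dist` on finite configurations: `min(1, d_Eucl)` when the cardinalities
agree, and `1` otherwise. -/
def confDist {d : ℕ} (ζ η : Set (EuclideanSpace ℝ (Fin d))) : ℝ :=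
  if ζ.ncard = η.ncard then min 1 (dEucl ζ η) else 1

namespace ConfAux

variable {d : ℕ}

/-- The set of candidate values in the definition of `dEucl`. -/
def dSet (ζ η : Set (EuclideanSpace ℝ (Fin d))) : Set ℝ :=
  {r | ∃ e : EuclideanSpace ℝ (Fin d) → EuclideanSpace ℝ (Fin d),
    Set.BijOn e ζ η ∧ r = Real.sqrt (∑ᶠ x ∈ ζ, ‖x - e x‖ ^ 2)}

lemma dEucl_eq (ζ η : Set (EuclideanSpace ℝ (Fin d))) : dEucl ζ η = sInf (dSet ζ η) := rfl

lemma dSet_nonneg {ζ η : Set (EuclideanSpace ℝ (Fin d))} {r : ℝ} (hr : r ∈ dSet ζ η) :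
    0 ≤ r := by
  obtain ⟨e, -, rfl⟩ := hr
  exact Real.sqrt_nonneg _

lemma dSet_bddBelow (ζ η : Set (EuclideanSpace ℝ (Fin d))) : BddBelow (dSet ζ η) :=
  ⟨0, fun _ hr => dSet_nonneg hr⟩

lemma dEucl_nonneg (ζ η : Set (EuclideanSpace ℝ (Fin d))) : 0 ≤ dEucl ζ η :=
  Real.sInf_nonneg fun _ hr => dSet_nonneg hr

lemma exists_bijOn {ζ η : Set (EuclideanSpace ℝ (Fin d))} (hζ : ζ.Finite) (hη : η.Finite)
    (h : ζ.ncard = η.ncard) :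
    ∃ e : EuclideanSpace ℝ (Fin d) → EuclideanSpace ℝ (Fin d), Set.BijOn e ζ η :=
  hζ.exists_bijOn_of_encard_eq (by rw [← hζ.cast_ncard_eq, ← hη.cast_ncard_eq, h])

lemma dSet_nonempty {ζ η : Set (EuclideanSpace ℝ (Fin d))} (hζ : ζ.Finite) (hη : η.Finite)
    (h : ζ.ncard = η.ncard) : (dSet ζ η).Nonempty := by
  obtain ⟨e, he⟩ := exists_bijOn hζ hη h
  exact ⟨_, e, he, rfl⟩

lemma dEucl_self (ζ : Set (EuclideanSpace ℝ (Fin d))) : dEucl ζ ζ = 0 := by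
  have hmem : (0 : ℝ) ∈ dSet ζ ζ := ⟨id, Set.bijOn_id ζ, by simp⟩
  exact le_antisymm (csInf_le (dSet_bddBelow ζ ζ) hmem) (dEucl_nonneg ζ ζ)

lemma dSet_subset (ζ η : Set (EuclideanSpace ℝ (Fin d))) : dSet ζ η ⊆ dSet η ζ := by
  rintro r ⟨e, he, rfl⟩
  refine ⟨Function.invFunOn e ζ, ?_, ?_⟩
  · exact he.invOn_invFunOn.symm.bijOn he.surjOn.mapsTo_invFunOn he.mapsTo
  · congr 1
    refine finsum_mem_eq_of_bijOn e he fun x hx => ?_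
    rw [he.invOn_invFunOn.1 hx, norm_sub_rev]

lemma dEucl_symm (ζ η : Set (EuclideanSpace ℝ (Fin d))) : dEucl ζ η = dEucl η ζ := by
  rw [dEucl_eq, dEucl_eq, Set.Subset.antisymm (dSet_subset ζ η) (dSet_subset η ζ)]

lemma dEucl_pos {ζ η : Set (EuclideanSpace ℝ (Fin d))} (hζ : ζ.Finite) (hη : η.Finite)
    (hcard : ζ.ncard = η.ncard) (hne : ζ ≠ η) : 0 < dEucl ζ η := by
  -- find a point of `ζ` not in `η`
  have hz : ∃ z ∈ ζ, z ∉ η := by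
    by_contra h
    push_neg at h
    exact hne (Set.eq_of_subset_of_ncard_le h hcard.ge hη)
  obtain ⟨z, hzζ, hzη⟩ := hz
  have hηne : η.Nonempty := by
    rcases η.eq_empty_or_nonempty with h | h
    · exfalso
      rw [h, Set.ncard_empty] at hcard
      rw [(Set.ncard_eq_zero hζ).mp hcard] at hzζ
      exact absurd hzζ (by simp)
    · exact h
  have hδ : 0 < Metric.infDist z η :=
    (hη.isClosed.notMem_iff_infDist_pos hηne).mp hzη
  refine lt_of_lt_of_le hδ (le_csInf (dSet_nonempty hζ hη hcard) ?_)
  rintro r ⟨e, he, rfl⟩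
  have h1 : Metric.infDist z η ≤ ‖z - e z‖ := by
    rw [← dist_eq_norm]
    exact Metric.infDist_le_dist_of_mem (he.mapsTo hzζ)
  have h2 : ‖z - e z‖ ^ 2 ≤ ∑ᶠ x ∈ ζ, ‖x - e x‖ ^ 2 := by
    rw [finsum_mem_eq_finite_toFinset_sum _ hζ]
    exact Finset.single_le_sum (f := fun x => ‖x - e x‖ ^ 2) (fun i _ => sq_nonneg _) (hζ.mem_toFinset.mpr hzζ)
  calc Metric.infDist z η ≤ ‖z - e z‖ := h1
    _ = Real.sqrt (‖z - e z‖ ^ 2) := (Real.sqrt_sq (norm_nonneg _)).symm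
    _ ≤ _ := Real.sqrt_le_sqrt h2

lemma sqrt_sum_sq_eq_norm {ι : Type*} [Fintype ι] {E : Type*} [NormedAddCommGroup E]
    (f : ι → E) :
    Real.sqrt (∑ i, ‖f i‖ ^ 2) = ‖(WithLp.equiv 2 (ι → E)).symm f‖ := by
  rw [PiLp.norm_eq_sum (p := 2) (by norm_num)]
  rw [Real.sqrt_eq_rpow]
  norm_num

lemma sqrt_sum_triangle {ι : Type*} [Fintype ι] {E : Type*} [NormedAddCommGroup E]
    (u v : ι → E) :
    Real.sqrt (∑ i, ‖u i + v i‖ ^ 2) ≤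
      Real.sqrt (∑ i, ‖u i‖ ^ 2) + Real.sqrt (∑ i, ‖v i‖ ^ 2) := by
  rw [sqrt_sum_sq_eq_norm, sqrt_sum_sq_eq_norm, sqrt_sum_sq_eq_norm]
  have : (WithLp.equiv 2 (ι → E)).symm (fun i => u i + v i)
      = (WithLp.equiv 2 (ι → E)).symm u + (WithLp.equiv 2 (ι → E)).symm v := rfl
  rw [this]
  exact norm_add_le _ _

lemma sqrt_sum_norm_add_le {α : Type*} (s : Finset α) {E : Type*} [NormedAddCommGroup E]
    (u v : α → E) :
    Real.sqrt (∑ i ∈ s, ‖u i + v i‖ ^ 2) ≤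
      Real.sqrt (∑ i ∈ s, ‖u i‖ ^ 2) + Real.sqrt (∑ i ∈ s, ‖v i‖ ^ 2) := by
  rw [← Finset.sum_coe_sort s (fun i => ‖u i + v i‖ ^ 2),
      ← Finset.sum_coe_sort s (fun i => ‖u i‖ ^ 2),
      ← Finset.sum_coe_sort s (fun i => ‖v i‖ ^ 2)]
  exact sqrt_sum_triangle (fun i : s => u i) (fun i : s => v i)

lemma dEucl_triangle {ζ ξ η : Set (EuclideanSpace ℝ (Fin d))}
    (hζ : ζ.Finite) (hξ : ξ.Finite) (hη : η.Finite)
    (h1 : ζ.ncard = ξ.ncard) (h2 : ξ.ncard = η.ncard) :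
    dEucl ζ η ≤ dEucl ζ ξ + dEucl ξ η := by
  have key : ∀ a ∈ dSet ζ ξ, ∀ b ∈ dSet ξ η, dEucl ζ η ≤ a + b := by
    rintro _ ⟨e1, he1, rfl⟩ _ ⟨e2, he2, rfl⟩
    have hle : dEucl ζ η ≤ Real.sqrt (∑ᶠ x ∈ ζ, ‖x - e2 (e1 x)‖ ^ 2) :=
      csInf_le (dSet_bddBelow ζ η) ⟨e2 ∘ e1, he2.comp he1, rfl⟩
    refine hle.trans ?_
    have hmid : (∑ᶠ y ∈ ξ, ‖y - e2 y‖ ^ 2) = ∑ᶠ x ∈ ζ, ‖e1 x - e2 (e1 x)‖ ^ 2 :=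
      (finsum_mem_eq_of_bijOn e1 he1 fun x _ => rfl).symm
    rw [hmid, finsum_mem_eq_finite_toFinset_sum _ hζ, finsum_mem_eq_finite_toFinset_sum _ hζ,
        finsum_mem_eq_finite_toFinset_sum _ hζ]
    have := sqrt_sum_norm_add_le hζ.toFinset (fun x => x - e1 x) (fun x => e1 x - e2 (e1 x))
    simpa [sub_add_sub_cancel] using this
  have h3 : ∀ a ∈ dSet ζ ξ, dEucl ζ η - a ≤ dEucl ξ η := fun a ha =>
    le_csInf (dSet_nonempty hξ hη h2) fun b hb => sub_le_iff_le_add'.mpr (key a ha b hb)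
  have h4 : dEucl ζ η - dEucl ξ η ≤ dEucl ζ ξ :=
    le_csInf (dSet_nonempty hζ hξ h1) fun a ha => sub_le_comm.mp (h3 a ha)
  linarith

lemma confDist_nonneg (ζ η : Set (EuclideanSpace ℝ (Fin d))) : 0 ≤ confDist ζ η := by
  unfold confDist
  split
  · exact le_min zero_le_one (dEucl_nonneg ζ η)
  · exact zero_le_one

lemma confDist_le_one (ζ η : Set (EuclideanSpace ℝ (Fin d))) : confDist ζ η ≤ 1 := by
  unfold confDist
  split
  · exact min_le_left _ _
  · exact le_refl 1

lemma min_one_triangle {a b c : ℝ} (h : a ≤ b + c) (hb : 0 ≤ b) (hc : 0 ≤ c) :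
    min 1 a ≤ min 1 b + min 1 c := by
  have hb' : 0 ≤ min 1 b := le_min zero_le_one hb
  have hc' : 0 ≤ min 1 c := le_min zero_le_one hc
  rcases le_total 1 b with h1 | h1
  · have hbb : min 1 b = 1 := min_eq_left h1
    linarith [min_le_left 1 a]
  · rcases le_total 1 c with h2 | h2
    · have hcc : min 1 c = 1 := min_eq_left h2
      linarith [min_le_left 1 a]
    · rw [min_eq_right h1, min_eq_right h2]
      exact le_trans (min_le_right _ _) h

end ConfAux

open ConfAux in
/-- `dist` is a metric on the set `Γ₀(ℝ^d)` of finite subsets of `ℝ^d`. -/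
theorem confDist_is_metric (d : ℕ) (hd : 1 ≤ d) :
    (∀ ζ η : Set (EuclideanSpace ℝ (Fin d)), ζ.Finite → η.Finite →
      0 ≤ confDist ζ η ∧ (confDist ζ η = 0 ↔ ζ = η)) ∧
    (∀ ζ η : Set (EuclideanSpace ℝ (Fin d)), ζ.Finite → η.Finite →
      confDist ζ η = confDist η ζ) ∧
    (∀ ζ ξ η : Set (EuclideanSpace ℝ (Fin d)), ζ.Finite → ξ.Finite → η.Finite →
      confDist ζ η ≤ confDist ζ ξ + confDist ξ η) := by
  refine ⟨fun ζ η hζ hη => ⟨confDist_nonneg ζ η, ?_, ?_⟩, fun ζ η hζ hη => ?_, ?_⟩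
  · -- confDist = 0 → ζ = η
    intro h
    unfold confDist at h
    split_ifs at h with hc
    · by_contra hne
      have hpos : 0 < dEucl ζ η := dEucl_pos hζ hη hc hne
      have : 0 < min 1 (dEucl ζ η) := lt_min one_pos hpos
      linarith
    · exact absurd h one_ne_zero
  · rintro rfl
    unfold confDist
    rw [if_pos rfl, dEucl_self]
    simp
  · -- symmetry
    unfold confDist
    rcases eq_or_ne ζ.ncard η.ncard with h | h
    · rw [if_pos h, if_pos h.symm, dEucl_symm]
    · rw [if_neg h, if_neg (Ne.symm h)]
  · -- triangle inequality
    intro ζ ξ η hζ hξ hη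
    by_cases h1 : ζ.ncard = ξ.ncard <;> by_cases h2 : ξ.ncard = η.ncard
    · have h3 : ζ.ncard = η.ncard := h1.trans h2
      unfold confDist
      rw [if_pos h1, if_pos h2, if_pos h3]
      exact min_one_triangle (dEucl_triangle hζ hξ hη h1 h2)
        (dEucl_nonneg ζ ξ) (dEucl_nonneg ξ η)
    · have e2 : confDist ξ η = 1 := by unfold confDist; rw [if_neg h2]
      linarith [confDist_le_one ζ η, confDist_nonneg ζ ξ]
    · have e1 : confDist ζ ξ = 1 := by unfold confDist; rw [if_neg h1]
      linarith [confDist_le_one ζ η, confDist_nonneg ξ η]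
    · have e1 : confDist ζ ξ = 1 := by unfold confDist; rw [if_neg h1]
      have e2 : confDist ξ η = 1 := by unfold confDist; rw [if_neg h2]
      linarith [confDist_le_one ζ η]

end
end

section
/- Let d ∈ ℕ, d ≥ 1. The metric space (Γ_0(ℝ^d), dist) is a Polish space: it is separable, and its topology is induced by some complete metric (even though the metric dist itself is not complete). -/
open Filter Topology Metric Set

noncomputable section

/-- The space `Γ₀(ℝ^d)` of finite configurations. -/
def Gamma0 (d : ℕ) := {s : Set (EuclideanSpace ℝ (Fin d)) // s.Finite}

variable {d : ℕ}

abbrev E (d : ℕ) := EuclideanSpace ℝ (Fin d)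

lemma dSet_nonneg {ζ η : Set (E d)} : ∀ r ∈ {r | ∃ e : E d → E d,
    Set.BijOn e ζ η ∧ r = Real.sqrt (∑ᶠ x ∈ ζ, ‖x - e x‖ ^ 2)}, (0:ℝ) ≤ r := by
  rintro r ⟨e, -, rfl⟩; exact Real.sqrt_nonneg _

lemma dEucl_nonneg (ζ η : Set (E d)) : 0 ≤ dEucl ζ η :=
  Real.sInf_nonneg dSet_nonneg

lemma dEucl_le {ζ η : Set (E d)} {e : E d → E d} (he : Set.BijOn e ζ η) :
    dEucl ζ η ≤ Real.sqrt (∑ᶠ x ∈ ζ, ‖x - e x‖ ^ 2) :=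
  csInf_le ⟨0, dSet_nonneg⟩ ⟨e, he, rfl⟩

lemma exists_bijOn_of_ncard {ζ η : Set (E d)} (hζ : ζ.Finite) (hη : η.Finite)
    (h : ζ.ncard = η.ncard) : ∃ e : E d → E d, Set.BijOn e ζ η := by
  have := hζ.exists_bijOn_of_encard_eq (t := η)
    (by rw [← hζ.cast_ncard_eq, ← hη.cast_ncard_eq, h])
  exact this

lemma finsum_sq_nonneg_single {ζ : Set (E d)} (hζ : ζ.Finite) (f : E d → ℝ)
    {x : E d} (hx : x ∈ ζ) : f x ^ 2 ≤ ∑ᶠ y ∈ ζ, f y ^ 2 := by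
  rw [← Set.Finite.coe_toFinset hζ, finsum_mem_coe_finset]
  exact Finset.single_le_sum (fun i _ => sq_nonneg (f i)) (hζ.mem_toFinset.2 hx)

lemma disp_le {ζ : Set (E d)} (hζ : ζ.Finite) {e : E d → E d}
    {x : E d} (hx : x ∈ ζ) :
    ‖x - e x‖ ≤ Real.sqrt (∑ᶠ y ∈ ζ, ‖y - e y‖ ^ 2) := by
  have h1 : ‖x - e x‖ ^ 2 ≤ ∑ᶠ y ∈ ζ, ‖y - e y‖ ^ 2 :=
    finsum_sq_nonneg_single hζ (fun y => ‖y - e y‖) hx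
  calc ‖x - e x‖ = Real.sqrt (‖x - e x‖ ^ 2) := by
        rw [Real.sqrt_sq (norm_nonneg _)]
    _ ≤ _ := Real.sqrt_le_sqrt h1


section Part2
variable {d : ℕ}

lemma finsum_reindex {ζ : Set (E d)} (e : E d → E d) (he : Set.InjOn e ζ)
    (f : E d → ℝ) : ∑ᶠ y ∈ e '' ζ, f y = ∑ᶠ x ∈ ζ, f (e x) :=
  finsum_mem_image he

lemma dEucl_self {ζ : Set (E d)} : dEucl ζ ζ = 0 := by
  refine le_antisymm ?_ (dEucl_nonneg _ _)
  have h := dEucl_le (ζ := ζ) (e := id) (Set.bijOn_id ζ)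
  simpa using h

lemma dSet_symm_mem {ζ η : Set (E d)} {r : ℝ}
    (hr : r ∈ {r | ∃ e : E d → E d, Set.BijOn e ζ η ∧
      r = Real.sqrt (∑ᶠ x ∈ ζ, ‖x - e x‖ ^ 2)}) :
    r ∈ {r | ∃ e : E d → E d, Set.BijOn e η ζ ∧
      r = Real.sqrt (∑ᶠ x ∈ η, ‖x - e x‖ ^ 2)} := by
  classical
  obtain ⟨e, he, rfl⟩ := hr
  set e' := Function.invFunOn e ζ with he'def
  have hinv : Set.InvOn e' e ζ η := he.invOn_invFunOn
  have hbij : Set.BijOn e' η ζ := Set.BijOn.symm hinv.symm he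
  refine ⟨e', hbij, ?_⟩
  have himg : e '' ζ = η := he.image_eq
  have : ∑ᶠ y ∈ η, ‖y - e' y‖ ^ 2 = ∑ᶠ x ∈ ζ, ‖x - e x‖ ^ 2 := by
    rw [← himg, finsum_reindex e he.injOn]
    apply finsum_mem_congr rfl
    intro x hx
    rw [hinv.1 hx, norm_sub_rev]
  rw [this]

lemma dEucl_comm (ζ η : Set (E d)) : dEucl ζ η = dEucl η ζ := by
  unfold dEucl
  congr 1
  exact Set.Subset.antisymm (fun r hr => dSet_symm_mem hr)
    (fun r hr => dSet_symm_mem hr)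

end Part2

section Mink
variable {α : Type*}

lemma sqrt_sum_sq_add (s : Finset α) (F G : α → ℝ) :
    Real.sqrt (∑ i ∈ s, (F i + G i) ^ 2) ≤
      Real.sqrt (∑ i ∈ s, F i ^ 2) + Real.sqrt (∑ i ∈ s, G i ^ 2) := by
  classical
  let A : EuclideanSpace ℝ s := WithLp.toLp 2 (fun i => F i)
  let B : EuclideanSpace ℝ s := WithLp.toLp 2 (fun i => G i)
  have hA : ‖A‖ = Real.sqrt (∑ i ∈ s, F i ^ 2) := by
    rw [EuclideanSpace.norm_eq]
    congr 1
    rw [← Finset.sum_coe_sort s (fun i => F i ^ 2)]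
    exact Finset.sum_congr rfl fun i _ => by rw [Real.norm_eq_abs, sq_abs]
  have hB : ‖B‖ = Real.sqrt (∑ i ∈ s, G i ^ 2) := by
    rw [EuclideanSpace.norm_eq]
    congr 1
    rw [← Finset.sum_coe_sort s (fun i => G i ^ 2)]
    exact Finset.sum_congr rfl fun i _ => by rw [Real.norm_eq_abs, sq_abs]
  have hAB : ‖A + B‖ = Real.sqrt (∑ i ∈ s, (F i + G i) ^ 2) := by
    rw [EuclideanSpace.norm_eq]
    congr 1
    rw [← Finset.sum_coe_sort s (fun i => (F i + G i) ^ 2)]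
    exact Finset.sum_congr rfl fun i _ => by
      show ‖A i + B i‖ ^ 2 = _
      rw [Real.norm_eq_abs, sq_abs]
  calc Real.sqrt (∑ i ∈ s, (F i + G i) ^ 2) = ‖A + B‖ := hAB.symm
    _ ≤ ‖A‖ + ‖B‖ := norm_add_le A B
    _ = _ := by rw [hA, hB]

end Mink

section Tri
variable {d : ℕ}

lemma finsum_eq_toFinset {ζ : Set (E d)} (hζ : ζ.Finite) (g : E d → ℝ) :
    ∑ᶠ x ∈ ζ, g x = ∑ x ∈ hζ.toFinset, g x := by
  have := finsum_mem_coe_finset g hζ.toFinset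
  rw [Set.Finite.coe_toFinset] at this
  exact this

lemma dEucl_triangle {ζ ξ η : Set (E d)} (hζ : ζ.Finite) (hξ : ξ.Finite)
    (hη : η.Finite) (h1 : ζ.ncard = ξ.ncard) (h2 : ξ.ncard = η.ncard) :
    dEucl ζ η ≤ dEucl ζ ξ + dEucl ξ η := by
  classical
  set S1 := {r | ∃ e : E d → E d, Set.BijOn e ζ ξ ∧
      r = Real.sqrt (∑ᶠ x ∈ ζ, ‖x - e x‖ ^ 2)} with hS1
  set S2 := {r | ∃ e : E d → E d, Set.BijOn e ξ η ∧
      r = Real.sqrt (∑ᶠ x ∈ ξ, ‖x - e x‖ ^ 2)} with hS2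
  have hS1ne : S1.Nonempty := by
    obtain ⟨e, he⟩ := exists_bijOn_of_ncard hζ hξ h1
    exact ⟨_, e, he, rfl⟩
  have hS2ne : S2.Nonempty := by
    obtain ⟨e, he⟩ := exists_bijOn_of_ncard hξ hη h2
    exact ⟨_, e, he, rfl⟩
  have key : ∀ a ∈ S1, ∀ b ∈ S2, dEucl ζ η ≤ a + b := by
    rintro a ⟨e, he, rfl⟩ b ⟨f, hf, rfl⟩
    have hcomp : Set.BijOn (f ∘ e) ζ η := hf.comp he
    have step1 : dEucl ζ η ≤ Real.sqrt (∑ᶠ x ∈ ζ, ‖x - f (e x)‖ ^ 2) :=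
      dEucl_le hcomp
    have step2 : Real.sqrt (∑ᶠ x ∈ ζ, ‖x - f (e x)‖ ^ 2) ≤
        Real.sqrt (∑ x ∈ hζ.toFinset, (‖x - e x‖ + ‖e x - f (e x)‖) ^ 2) := by
      rw [finsum_eq_toFinset hζ]
      apply Real.sqrt_le_sqrt
      apply Finset.sum_le_sum
      intro i _
      have htri : ‖i - f (e i)‖ ≤ ‖i - e i‖ + ‖e i - f (e i)‖ := by
        calc ‖i - f (e i)‖ = ‖(i - e i) + (e i - f (e i))‖ := by
              rw [sub_add_sub_cancel]
          _ ≤ _ := norm_add_le _ _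
      exact pow_le_pow_left₀ (norm_nonneg _) htri 2
    have step3 : Real.sqrt (∑ x ∈ hζ.toFinset, (‖x - e x‖ + ‖e x - f (e x)‖) ^ 2) ≤
        Real.sqrt (∑ x ∈ hζ.toFinset, ‖x - e x‖ ^ 2) +
          Real.sqrt (∑ x ∈ hζ.toFinset, ‖e x - f (e x)‖ ^ 2) :=
      sqrt_sum_sq_add _ _ _
    have hre : ∑ x ∈ hζ.toFinset, ‖e x - f (e x)‖ ^ 2 = ∑ᶠ y ∈ ξ, ‖y - f y‖ ^ 2 := by
      rw [← finsum_eq_toFinset hζ, ← he.image_eq, finsum_reindex e he.injOn]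
    calc dEucl ζ η ≤ _ := step1
      _ ≤ _ := step2
      _ ≤ _ := step3
      _ = Real.sqrt (∑ᶠ x ∈ ζ, ‖x - e x‖ ^ 2) + Real.sqrt (∑ᶠ y ∈ ξ, ‖y - f y‖ ^ 2) := by
          rw [← finsum_eq_toFinset hζ, hre]
  have h3 : ∀ b ∈ S2, dEucl ζ η - b ≤ sInf S1 := by
    intro b hb
    apply le_csInf hS1ne
    intro a ha
    linarith [key a ha b hb]
  have h4 : dEucl ζ η - sInf S1 ≤ sInf S2 := by
    apply le_csInf hS2ne
    intro b hb
    linarith [h3 b hb]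
  have e1 : sInf S1 = dEucl ζ ξ := rfl
  have e2 : sInf S2 = dEucl ξ η := rfl
  rw [e1, e2] at h4
  linarith

end Tri

section CD
variable {d : ℕ}

lemma dEucl_eq_zero {ζ η : Set (E d)} (hζ : ζ.Finite) (hη : η.Finite)
    (hcard : ζ.ncard = η.ncard) (h : dEucl ζ η = 0) : ζ = η := by
  have hSne : {r | ∃ e : E d → E d, Set.BijOn e ζ η ∧
      r = Real.sqrt (∑ᶠ x ∈ ζ, ‖x - e x‖ ^ 2)}.Nonempty := by
    obtain ⟨e, he⟩ := exists_bijOn_of_ncard hζ hη hcard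
    exact ⟨_, e, he, rfl⟩
  have hsub : ζ ⊆ η := by
    intro x hx
    have hcl : x ∈ closure η := by
      rw [Metric.mem_closure_iff]
      intro ε hε
      obtain ⟨r, ⟨e, he, rfl⟩, hr⟩ := exists_lt_of_csInf_lt hSne (h ▸ hε : dEucl ζ η < ε)
      refine ⟨e x, he.mapsTo hx, ?_⟩
      calc dist x (e x) = ‖x - e x‖ := by rw [dist_eq_norm]
        _ ≤ _ := disp_le hζ hx
        _ < ε := hr
    rwa [hη.isClosed.closure_eq] at hcl
  exact Set.eq_of_subset_of_ncard_le hsub (le_of_eq hcard.symm) hη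

lemma confDist_nonneg (ζ η : Set (E d)) : 0 ≤ confDist ζ η := by
  unfold confDist
  split
  · exact le_min zero_le_one (dEucl_nonneg _ _)
  · norm_num

lemma confDist_self (ζ : Set (E d)) : confDist ζ ζ = 0 := by
  simp [confDist, dEucl_self]

lemma confDist_comm (ζ η : Set (E d)) : confDist ζ η = confDist η ζ := by
  unfold confDist
  rw [dEucl_comm]
  by_cases h : ζ.ncard = η.ncard
  · rw [if_pos h, if_pos h.symm]
  · rw [if_neg h, if_neg (fun hh : η.ncard = ζ.ncard => h hh.symm)]

lemma confDist_le_one (ζ η : Set (E d)) : confDist ζ η ≤ 1 := by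
  unfold confDist; split
  · exact min_le_left _ _
  · exact le_refl 1

lemma confDist_eq_zero {ζ η : Set (E d)} (hζ : ζ.Finite) (hη : η.Finite) :
    confDist ζ η = 0 ↔ ζ = η := by
  constructor
  · intro h
    unfold confDist at h
    split at h
    · rename_i hcard
      rcases min_eq_iff.1 h with ⟨h1, -⟩ | ⟨h2, -⟩
      · norm_num at h1
      · exact dEucl_eq_zero hζ hη hcard h2
    · norm_num at h
  · rintro rfl; exact confDist_self ζ

lemma min_one_tri {a b c : ℝ} (ha : a ≤ b + c) (hb : 0 ≤ b) (hc : 0 ≤ c) :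
    min 1 a ≤ min 1 b + min 1 c := by
  rcases le_total (1:ℝ) b with h | h
  · have : min 1 b = 1 := min_eq_left h
    rw [this]
    have h2 : min 1 a ≤ 1 := min_le_left _ _
    have h3 : (0:ℝ) ≤ min 1 c := le_min zero_le_one hc
    linarith
  · rcases le_total (1:ℝ) c with h' | h'
    · have : min 1 c = 1 := min_eq_left h'
      rw [this]
      have h2 : min 1 a ≤ 1 := min_le_left _ _
      have h3 : (0:ℝ) ≤ min 1 b := le_min zero_le_one hb
      linarith
    · rw [min_eq_right h, min_eq_right h']
      exact le_trans (min_le_right _ _) ha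

lemma confDist_triangle {ζ ξ η : Set (E d)} (hζ : ζ.Finite) (hξ : ξ.Finite)
    (hη : η.Finite) : confDist ζ η ≤ confDist ζ ξ + confDist ξ η := by
  by_cases h1 : ζ.ncard = ξ.ncard
  · by_cases h2 : ξ.ncard = η.ncard
    · have h3 : ζ.ncard = η.ncard := h1.trans h2
      unfold confDist
      rw [if_pos h1, if_pos h2, if_pos h3]
      exact min_one_tri (dEucl_triangle hζ hξ hη h1 h2) (dEucl_nonneg _ _)
        (dEucl_nonneg _ _)
    · have he : confDist ξ η = 1 := by unfold confDist; rw [if_neg h2]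
      linarith [confDist_le_one ζ η, confDist_nonneg ζ ξ, he.ge]
  · have he : confDist ζ ξ = 1 := by unfold confDist; rw [if_neg h1]
    linarith [confDist_le_one ζ η, confDist_nonneg ξ η, he.ge]

end CD

section Extract
variable {d : ℕ}

lemma confDist_extract {ζ η : Set (E d)} (hζ : ζ.Finite) (hη : η.Finite)
    {δ : ℝ} (hδ : δ ≤ 1) (h : confDist ζ η < δ) :
    ζ.ncard = η.ncard ∧ ∃ e, Set.BijOn e ζ η ∧
      Real.sqrt (∑ᶠ x ∈ ζ, ‖x - e x‖ ^ 2) < δ := by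
  have hδ0 : 0 < δ := lt_of_le_of_lt (confDist_nonneg ζ η) h
  unfold confDist at h
  split at h
  · rename_i hcard
    refine ⟨hcard, ?_⟩
    have hd : dEucl ζ η < δ := by
      rcases min_lt_iff.1 h with h1 | h1
      · linarith
      · exact h1
    have hSne : {r | ∃ e : E d → E d, Set.BijOn e ζ η ∧
        r = Real.sqrt (∑ᶠ x ∈ ζ, ‖x - e x‖ ^ 2)}.Nonempty := by
      obtain ⟨e, he⟩ := exists_bijOn_of_ncard hζ hη hcard
      exact ⟨_, e, he, rfl⟩
    obtain ⟨r, ⟨e, he, rfl⟩, hr⟩ := exists_lt_of_csInf_lt hSne hd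
    exact ⟨e, he, hr⟩
  · linarith

lemma confDist_le_sqrt {ζ η : Set (E d)} (hζ : ζ.Finite) {e : E d → E d}
    (he : Set.BijOn e ζ η) :
    confDist ζ η ≤ Real.sqrt (∑ᶠ x ∈ ζ, ‖x - e x‖ ^ 2) := by
  have hcard : ζ.ncard = η.ncard := by
    rw [← he.image_eq, Set.ncard_image_of_injOn he.injOn]
  unfold confDist
  rw [if_pos hcard]
  exact le_trans (min_le_right _ _) (dEucl_le he)

end Extract

section Gap
variable {d : ℕ}

def gapSet (ζ : Set (E d)) : Set ℝ := {r | ∃ x ∈ ζ, ∃ y ∈ ζ, x ≠ y ∧ r = ‖x - y‖}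

noncomputable def gap (ζ : Set (E d)) : ℝ := sInf (gapSet ζ)

noncomputable def hfun (ζ : Set (E d)) : ℝ := (gap ζ)⁻¹

lemma gapSet_nonneg {ζ : Set (E d)} : ∀ r ∈ gapSet ζ, (0:ℝ) ≤ r := by
  rintro r ⟨x, hx, y, hy, hxy, rfl⟩; exact norm_nonneg _

lemma gapSet_pos {ζ : Set (E d)} : ∀ r ∈ gapSet ζ, (0:ℝ) < r := by
  rintro r ⟨x, hx, y, hy, hxy, rfl⟩
  rw [norm_pos_iff]
  exact sub_ne_zero_of_ne hxy

lemma gapSet_finite {ζ : Set (E d)} (hζ : ζ.Finite) : (gapSet ζ).Finite := by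
  have : gapSet ζ ⊆ (fun p : E d × E d => ‖p.1 - p.2‖) '' (ζ ×ˢ ζ) := by
    rintro r ⟨x, hx, y, hy, hxy, rfl⟩
    exact ⟨(x, y), ⟨hx, hy⟩, rfl⟩
  exact ((hζ.prod hζ).image _).subset this

lemma gapSet_bddBelow {ζ : Set (E d)} : BddBelow (gapSet ζ) := ⟨0, gapSet_nonneg⟩

lemma gap_nonneg (ζ : Set (E d)) : 0 ≤ gap ζ := Real.sInf_nonneg gapSet_nonneg

lemma hfun_nonneg (ζ : Set (E d)) : 0 ≤ hfun ζ := inv_nonneg.2 (gap_nonneg ζ)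

lemma gap_le {ζ : Set (E d)} {x y : E d} (hx : x ∈ ζ) (hy : y ∈ ζ)
    (hxy : x ≠ y) : gap ζ ≤ ‖x - y‖ :=
  csInf_le gapSet_bddBelow ⟨x, hx, y, hy, hxy, rfl⟩

lemma gap_pos {ζ : Set (E d)} (hζ : ζ.Finite)
    (hne : (gapSet ζ).Nonempty) : 0 < gap ζ :=
  gapSet_pos _ (hne.csInf_mem (gapSet_finite hζ))

lemma gap_mem {ζ : Set (E d)} (hζ : ζ.Finite) (hne : (gapSet ζ).Nonempty) :
    gap ζ ∈ gapSet ζ := hne.csInf_mem (gapSet_finite hζ)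

lemma hfun_eq_zero {ζ : Set (E d)} (hsub : ∀ x ∈ ζ, ∀ y ∈ ζ, x = y) :
    hfun ζ = 0 := by
  have : gapSet ζ = ∅ := by
    ext r
    simp only [gapSet, Set.mem_setOf_eq, Set.mem_empty_iff_false, iff_false]
    rintro ⟨x, hx, y, hy, hxy, rfl⟩
    exact hxy (hsub x hx y hy)
  rw [hfun, gap, this, Real.sInf_empty, inv_zero]

/-- Separation bound: if `hfun ζ < H` then all distinct points of `ζ` are at
distance at least `H⁻¹`. -/
lemma sep_of_hfun_lt {ζ : Set (E d)} (hζ : ζ.Finite) {H : ℝ}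
    (hH : hfun ζ < H) : ∀ x ∈ ζ, ∀ y ∈ ζ, x ≠ y → H⁻¹ ≤ ‖x - y‖ := by
  intro x hx y hy hxy
  have hne : (gapSet ζ).Nonempty := ⟨‖x - y‖, x, hx, y, hy, hxy, rfl⟩
  have hg : 0 < gap ζ := gap_pos hζ hne
  have hinv : 0 < (gap ζ)⁻¹ := inv_pos.2 hg
  have hH0 : 0 < H := lt_trans hinv (by rwa [hfun] at hH)
  have : H⁻¹ < gap ζ := by
    have := (inv_lt_inv₀ hH0 hinv).2 (by rwa [hfun] at hH)
    rwa [inv_inv] at this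
  exact le_trans this.le (gap_le hx hy hxy)

end Gap

section Cont
variable {d : ℕ}

lemma norm_perturb {a b a' b' : E d} :
    ‖a' - b'‖ ≤ ‖a - b‖ + ‖a - a'‖ + ‖b - b'‖ := by
  have h : a' - b' = (a' - a) + (a - b) + (b - b') := by abel
  rw [h]
  calc ‖(a' - a) + (a - b) + (b - b')‖ ≤ ‖a' - a‖ + ‖a - b‖ + ‖b - b'‖ :=
        norm_add₃_le
    _ = ‖a - b‖ + ‖a - a'‖ + ‖b - b'‖ := by rw [norm_sub_rev a' a]; ring

lemma hfun_cont {ζ : Set (E d)} (hζ : ζ.Finite) {ε : ℝ} (hε : 0 < ε) :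
    ∃ δ : ℝ, 0 < δ ∧ δ ≤ 1/2 ∧ ∀ η : Set (E d), η.Finite →
      confDist ζ η < δ → |hfun ζ - hfun η| < ε := by
  by_cases hpair : ∃ x ∈ ζ, ∃ y ∈ ζ, x ≠ y
  · obtain ⟨x0, hx0, y0, hy0, hxy0⟩ := hpair
    have hne : (gapSet ζ).Nonempty := ⟨‖x0 - y0‖, x0, hx0, y0, hy0, hxy0, rfl⟩
    set g := gap ζ with hgdef
    have hg : 0 < g := gap_pos hζ hne
    obtain ⟨x1, hx1, y1, hy1, hxy1, hg1⟩ := gap_mem hζ hne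
    refine ⟨min (1/2) (min (g/4) (ε * g^2 / 8)), by positivity, min_le_left _ _, ?_⟩
    intro η hη hcd
    set δ := min (1/2) (min (g/4) (ε * g^2 / 8)) with hδdef
    have hδ0 : 0 < δ := by positivity
    have hδ1 : δ ≤ 1 := le_trans (min_le_left _ _) (by norm_num)
    have hδg : δ ≤ g/4 := le_trans (min_le_right _ _) (min_le_left _ _)
    have hδε : δ ≤ ε * g^2 / 8 := le_trans (min_le_right _ _) (min_le_right _ _)
    obtain ⟨hcard, e, he, hsq⟩ := confDist_extract hζ hη hδ1 hcd
    have hdisp : ∀ x ∈ ζ, ‖x - e x‖ < δ := fun x hx =>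
      lt_of_le_of_lt (disp_le hζ hx) hsq
    -- η has a pair
    have hexy : e x0 ≠ e y0 := fun hcon => hxy0 (he.injOn hx0 hy0 hcon)
    have hηne : (gapSet η).Nonempty :=
      ⟨‖e x0 - e y0‖, e x0, he.mapsTo hx0, e y0, he.mapsTo hy0, hexy, rfl⟩
    -- upper bound for gap η
    have hup : gap η ≤ g + 2*δ := by
      have h1 : gap η ≤ ‖e x1 - e y1‖ :=
        gap_le (he.mapsTo hx1) (he.mapsTo hy1)
          (fun hcon => hxy1 (he.injOn hx1 hy1 hcon))
      have h2 : ‖e x1 - e y1‖ ≤ ‖x1 - y1‖ + 2*δ := by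
        have := norm_perturb (a := x1) (b := y1) (a' := e x1) (b' := e y1)
        have d1 := hdisp x1 hx1
        have d2 := hdisp y1 hy1
        linarith
      calc gap η ≤ ‖e x1 - e y1‖ := h1
        _ ≤ ‖x1 - y1‖ + 2*δ := h2
        _ = g + 2*δ := by rw [← hg1]
    -- lower bound for gap η
    have hlow : g - 2*δ ≤ gap η := by
      apply le_csInf hηne
      rintro r ⟨y, hy, y', hy', hyy', rfl⟩
      obtain ⟨x, hx, rfl⟩ := he.surjOn hy
      obtain ⟨x', hx', rfl⟩ := he.surjOn hy'
      have hxx' : x ≠ x' := fun hcon => hyy' (by rw [hcon])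
      have h1 : g ≤ ‖x - x'‖ := gap_le hx hx' hxx'
      have h2 : ‖x - x'‖ ≤ ‖e x - e x'‖ + 2*δ := by
        have := norm_perturb (a := e x) (b := e x') (a' := x) (b' := x')
        have d1 := hdisp x hx
        have d2 := hdisp x' hx'
        rw [norm_sub_rev (e x) x, norm_sub_rev (e x') x'] at this
        linarith
      linarith
    -- conclude
    have hgη : g/2 ≤ gap η := by linarith
    have hgη0 : 0 < gap η := by linarith
    have key : (g⁻¹ - (gap η)⁻¹) * (g * gap η) = gap η - g := by
      field_simp
    rw [show hfun ζ = g⁻¹ from rfl, show hfun η = (gap η)⁻¹ from rfl,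
      abs_sub_lt_iff]
    have hprod : (ε * g) * (g/2) ≤ (ε * g) * gap η :=
      mul_le_mul_of_nonneg_left hgη (by positivity)
    constructor
    · nlinarith [key, mul_pos hg hgη0, hprod, hδε, hδ0, hg, hε]
    · nlinarith [key, mul_pos hg hgη0, hprod, hδε, hδ0, hg, hε]
  · push_neg at hpair
    refine ⟨1/2, by norm_num, le_refl _, ?_⟩
    intro η hη hcd
    have hcard := (confDist_extract hζ hη (by norm_num) hcd).1
    have hζ1 : ζ.ncard ≤ 1 := (Set.ncard_le_one hζ).2 hpair
    have hη1 : ∀ x ∈ η, ∀ y ∈ η, x = y := (Set.ncard_le_one hη).1 (hcard ▸ hζ1)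
    rw [hfun_eq_zero hpair, hfun_eq_zero hη1, sub_zero, abs_zero]
    exact hε

end Cont

section Disp
variable {d : ℕ}

lemma sqrt_nat_le (n : ℕ) : Real.sqrt n ≤ (n : ℝ) + 1 := by
  have h : (n : ℝ) ≤ ((n : ℝ) + 1) ^ 2 := by nlinarith [Nat.cast_nonneg (α := ℝ) n]
  have := Real.sqrt_le_sqrt h
  rwa [Real.sqrt_sq (by positivity)] at this

lemma confDist_lt_of_disp {ζ η : Set (E d)} (hζ : ζ.Finite) {e : E d → E d}
    (he : Set.BijOn e ζ η) {r ε : ℝ} (h0 : 0 ≤ r)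
    (hr : ∀ x ∈ ζ, ‖x - e x‖ ≤ r)
    (hrε : ((ζ.ncard : ℝ) + 1) * r < ε) : confDist ζ η < ε := by
  have hcard : hζ.toFinset.card = ζ.ncard := (Set.ncard_eq_toFinset_card ζ hζ).symm
  have hsum : ∑ᶠ x ∈ ζ, ‖x - e x‖ ^ 2 ≤ (ζ.ncard : ℝ) * r ^ 2 := by
    rw [finsum_eq_toFinset hζ]
    calc ∑ x ∈ hζ.toFinset, ‖x - e x‖ ^ 2 ≤ hζ.toFinset.card • (r ^ 2) := by
          apply Finset.sum_le_card_nsmul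
          intro x hx
          exact pow_le_pow_left₀ (norm_nonneg _) (hr x (hζ.mem_toFinset.1 hx)) 2
      _ = (ζ.ncard : ℝ) * r ^ 2 := by
          rw [nsmul_eq_mul, hcard]
  calc confDist ζ η ≤ Real.sqrt (∑ᶠ x ∈ ζ, ‖x - e x‖ ^ 2) := confDist_le_sqrt hζ he
    _ ≤ Real.sqrt ((ζ.ncard : ℝ) * r ^ 2) := Real.sqrt_le_sqrt hsum
    _ = Real.sqrt (ζ.ncard : ℝ) * r := by
        rw [Real.sqrt_mul (Nat.cast_nonneg _), Real.sqrt_sq h0]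
    _ ≤ ((ζ.ncard : ℝ) + 1) * r := by
        apply mul_le_mul_of_nonneg_right (sqrt_nat_le _) h0
    _ < ε := hrε

end Disp

section Rho
variable {d : ℕ}

noncomputable def rho0 (ζ η : Gamma0 d) : ℝ :=
  confDist ζ.1 η.1 + min 1 |hfun ζ.1 - hfun η.1|

lemma rho0_nonneg (ζ η : Gamma0 d) : 0 ≤ rho0 ζ η :=
  add_nonneg (confDist_nonneg _ _) (le_min zero_le_one (abs_nonneg _))

lemma rho0_self (ζ : Gamma0 d) : rho0 ζ ζ = 0 := by
  simp [rho0, confDist_self]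

lemma rho0_eq_zero (ζ η : Gamma0 d) : rho0 ζ η = 0 ↔ ζ = η := by
  constructor
  · intro h
    have h1 : confDist ζ.1 η.1 = 0 := by
      have := rho0_nonneg ζ η
      have h2 := confDist_nonneg ζ.1 η.1
      have h3 : (0:ℝ) ≤ min 1 |hfun ζ.1 - hfun η.1| := le_min zero_le_one (abs_nonneg _)
      unfold rho0 at h
      linarith
    exact Subtype.ext ((confDist_eq_zero ζ.2 η.2).1 h1)
  · rintro rfl; exact rho0_self ζ

lemma rho0_comm (ζ η : Gamma0 d) : rho0 ζ η = rho0 η ζ := by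
  unfold rho0
  rw [confDist_comm, abs_sub_comm]

lemma rho0_triangle (ζ ξ η : Gamma0 d) : rho0 ζ η ≤ rho0 ζ ξ + rho0 ξ η := by
  unfold rho0
  have h1 := confDist_triangle ζ.2 ξ.2 η.2
  have h2 : min 1 |hfun ζ.1 - hfun η.1| ≤
      min 1 |hfun ζ.1 - hfun ξ.1| + min 1 |hfun ξ.1 - hfun η.1| :=
    min_one_tri (abs_sub_le _ _ _)
      (abs_nonneg _) (abs_nonneg _)
  linarith

lemma confDist_le_rho0 (ζ η : Gamma0 d) : confDist ζ.1 η.1 ≤ rho0 ζ η := by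
  unfold rho0
  have : (0:ℝ) ≤ min 1 |hfun ζ.1 - hfun η.1| := le_min zero_le_one (abs_nonneg _)
  linarith

/-- continuity of `rho0` w.r.t. `confDist` -/
lemma rho0_cont (ζ : Gamma0 d) {ε : ℝ} (hε : 0 < ε) :
    ∃ δ > (0:ℝ), ∀ η : Gamma0 d, confDist ζ.1 η.1 < δ → rho0 ζ η < ε := by
  obtain ⟨δ, hδ0, hδhalf, hδ⟩ := hfun_cont ζ.2 (half_pos hε)
  refine ⟨min δ (ε/2), lt_min hδ0 (half_pos hε), ?_⟩
  intro η h
  have h1 : confDist ζ.1 η.1 < δ := lt_of_lt_of_le h (min_le_left _ _)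
  have h2 : confDist ζ.1 η.1 < ε/2 := lt_of_lt_of_le h (min_le_right _ _)
  have h3 := hδ η.1 η.2 h1
  have h4 : min 1 |hfun ζ.1 - hfun η.1| ≤ |hfun ζ.1 - hfun η.1| := min_le_right _ _
  unfold rho0
  linarith

end Rho

section Sep
variable {d : ℕ}

lemma dense_exists {S : Set (E d)} (hS : Dense S) (x : E d) {r : ℝ}
    (hr : 0 < r) : ∃ s ∈ S, dist x s < r := by
  obtain ⟨s, hs⟩ := Metric.dense_iff.1 hS x r hr
  exact ⟨s, hs.2, by rw [dist_comm]; exact Metric.mem_ball.1 hs.1⟩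

lemma gamma0_separable :
    ∃ D : Set (Gamma0 d), D.Countable ∧
      ∀ ζ : Gamma0 d, ∀ ε > (0 : ℝ), ∃ η ∈ D, confDist ζ.1 η.1 < ε := by
  classical
  obtain ⟨S, hScount, hSdense⟩ := TopologicalSpace.exists_countable_dense (E d)
  refine ⟨{γ : Gamma0 d | γ.1 ⊆ S}, ?_, ?_⟩
  · have h1 : {t : Set (E d) | t.Finite ∧ t ⊆ S}.Countable :=
      Set.countable_setOf_finite_subset hScount
    have h2 : {γ : Gamma0 d | γ.1 ⊆ S} ⊆
        Subtype.val ⁻¹' {t : Set (E d) | t.Finite ∧ t ⊆ S} := by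
      intro γ hγ
      exact ⟨γ.2, hγ⟩
    exact (h1.preimage Subtype.val_injective).mono h2
  · intro ζ ε hε
    set n := ζ.1.ncard with hn
    by_cases hpair : ∃ x ∈ ζ.1, ∃ y ∈ ζ.1, x ≠ y
    · obtain ⟨x0, hx0, y0, hy0, hxy0⟩ := hpair
      have hne : (gapSet ζ.1).Nonempty := ⟨‖x0 - y0‖, x0, hx0, y0, hy0, hxy0, rfl⟩
      have hg : 0 < gap ζ.1 := gap_pos ζ.2 hne
      set r := min (ε / (2 * (n + 1))) (gap ζ.1 / 3) with hrdef
      have hr0 : 0 < r := lt_min (by positivity) (by positivity)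
      have hq : ∀ x : E d, ∃ s ∈ S, dist x s < r := fun x =>
        dense_exists hSdense x hr0
      set q : E d → E d := fun x => Classical.choose (hq x) with hqdef
      have hqS : ∀ x, q x ∈ S := fun x => (Classical.choose_spec (hq x)).1
      have hqd : ∀ x, ‖x - q x‖ < r := fun x => by
        rw [← dist_eq_norm]; exact (Classical.choose_spec (hq x)).2
      have hr3 : 3 * r ≤ gap ζ.1 := by
        have := min_le_right (ε / (2 * ((n:ℝ) + 1))) (gap ζ.1 / 3)
        rw [← hrdef] at this
        linarith
      have hinj : Set.InjOn q ζ.1 := by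
        intro x hx x' hx' hqq
        by_contra hne'
        have h1 : gap ζ.1 ≤ ‖x - x'‖ := gap_le hx hx' hne'
        have h2 : ‖x - x'‖ ≤ ‖x - q x‖ + ‖x' - q x'‖ := by
          have heq : x - x' = (x - q x) - (x' - q x') := by rw [hqq]; abel
          rw [heq]
          exact norm_sub_le _ _
        have := hqd x
        have := hqd x'
        linarith
      refine ⟨⟨q '' ζ.1, ζ.2.image q⟩, ?_, ?_⟩
      · intro y hy
        obtain ⟨x, _, rfl⟩ := hy
        exact hqS x
      · apply confDist_lt_of_disp ζ.2 (hinj.bijOn_image) hr0.le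
          (fun x _ => (hqd x).le)
        have hrε : r ≤ ε / (2 * ((n:ℝ) + 1)) := min_le_left _ _
        have hn1 : (0:ℝ) < (n:ℝ) + 1 := by positivity
        calc ((ζ.1.ncard : ℝ) + 1) * r = ((n : ℝ) + 1) * r := by rw [hn]
          _ ≤ ((n : ℝ) + 1) * (ε / (2 * ((n:ℝ) + 1))) :=
              mul_le_mul_of_nonneg_left hrε hn1.le
          _ = ε / 2 := by field_simp
          _ < ε := by linarith
    · -- ζ has at most one point
      push_neg at hpair
      rcases Set.eq_empty_or_nonempty ζ.1 with hem | ⟨x0, hx0⟩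
      · refine ⟨⟨∅, Set.finite_empty⟩, by show (∅ : Set (E d)) ⊆ S; exact Set.empty_subset _, ?_⟩
        rw [hem]
        simpa [confDist_self] using hε
      · -- ζ = {x0}
        have hζeq : ζ.1 = {x0} := by
          apply Set.eq_singleton_iff_unique_mem.2
          exact ⟨hx0, fun y hy => hpair y hy x0 hx0⟩
        obtain ⟨s, hsS, hs⟩ : ∃ s ∈ S, dist x0 s < ε / 4 :=
          dense_exists hSdense x0 (by positivity)
        refine ⟨⟨{s}, Set.finite_singleton s⟩, by show ({s} : Set (E d)) ⊆ S; exact Set.singleton_subset_iff.2 hsS, ?_⟩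
        rw [hζeq]
        have hbij : Set.BijOn (fun _ => s) ({x0} : Set (E d)) {s} := by
          constructor
          · intro x hx; exact rfl
          · exact ⟨fun x hx y hy _ => by rw [Set.mem_singleton_iff.1 hx,
              Set.mem_singleton_iff.1 hy], fun y hy => ⟨x0, rfl, (Set.mem_singleton_iff.1 hy).symm⟩⟩
        apply confDist_lt_of_disp (Set.finite_singleton x0) hbij
          (le_of_lt (by positivity : (0:ℝ) < ε/4))
        · intro x hx
          rw [Set.mem_singleton_iff.1 hx, ← dist_eq_norm]
          exact hs.le
        · rw [Set.ncard_singleton]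
          norm_num
          linarith

end Sep

section Complete
variable {d : ℕ}

lemma min_one_lt {x δ : ℝ} (hδ : δ ≤ 1) (h : min 1 x < δ) : x < δ := by
  rcases min_lt_iff.1 h with h1 | h1
  · linarith
  · exact h1

lemma tendsto_rho0_of_confDist (u : ℕ → Gamma0 d) (l : Gamma0 d)
    (h : ∀ ε > (0:ℝ), ∃ N, ∀ m ≥ N, confDist (u m).1 l.1 < ε) :
    Tendsto (fun m => rho0 (u m) l) atTop (𝓝 0) := by
  rw [Metric.tendsto_atTop]
  intro ε hε
  obtain ⟨δ, hδ0, hδ⟩ := rho0_cont l hε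
  obtain ⟨N, hN⟩ := h δ hδ0
  refine ⟨N, fun m hm => ?_⟩
  rw [Real.dist_eq, sub_zero, abs_of_nonneg (rho0_nonneg _ _)]
  rw [rho0_comm]
  apply hδ
  rw [confDist_comm]
  exact hN m hm

lemma gamma0_complete (u : ℕ → Gamma0 d)
    (hu : ∀ ε > (0:ℝ), ∃ N : ℕ, ∀ m ≥ N, ∀ k ≥ N, rho0 (u m) (u k) < ε) :
    ∃ l : Gamma0 d, Tendsto (fun m => rho0 (u m) l) atTop (𝓝 0) := by
  classical
  -- Step 1: uniform separation constant
  obtain ⟨N₁, hN₁⟩ := hu (1/2) (by norm_num)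
  set H : ℝ := hfun (u N₁).1 + 1/2 with hHdef
  have hH0 : 0 < H := by
    have := hfun_nonneg (u N₁).1
    rw [hHdef]; linarith
  set c : ℝ := H⁻¹ with hcdef
  have hc0 : 0 < c := inv_pos.2 hH0
  have hsep : ∀ m ≥ N₁, ∀ x ∈ (u m).1, ∀ y ∈ (u m).1, x ≠ y → c ≤ ‖x - y‖ := by
    intro m hm
    have hρ : rho0 (u m) (u N₁) < 1/2 := hN₁ m hm N₁ (le_refl _)
    have h1 : min 1 |hfun (u m).1 - hfun (u N₁).1| < 1/2 := by
      have := confDist_nonneg (u m).1 (u N₁).1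
      unfold rho0 at hρ
      linarith
    have h2 : |hfun (u m).1 - hfun (u N₁).1| < 1/2 := min_one_lt (by norm_num) h1
    have h3 : hfun (u m).1 < H := by
      have := abs_lt.1 h2
      rw [hHdef]; linarith [this.2]
    exact fun x hx y hy hxy => sep_of_hfun_lt (u m).2 h3 x hx y hy hxy
  -- Step 2: base configuration
  set δ₀ : ℝ := min (1/2) (c/4) with hδ₀def
  have hδ₀0 : 0 < δ₀ := lt_min (by norm_num) (by positivity)
  have hδ₀1 : δ₀ ≤ 1 := le_trans (min_le_left _ _) (by norm_num)
  have hδ₀c : δ₀ ≤ c/4 := min_le_right _ _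
  obtain ⟨N₂', hN₂'⟩ := hu δ₀ hδ₀0
  set N₂ : ℕ := max N₁ N₂' with hN₂def
  set ζ₀ : Set (E d) := (u N₂).1 with hζ₀def
  have hζ₀ : ζ₀.Finite := (u N₂).2
  have hbase : ∀ m, N₂ ≤ m → confDist ζ₀ (u m).1 < δ₀ := by
    intro m hm
    exact lt_of_le_of_lt (confDist_le_rho0 (u N₂) (u m))
      (hN₂' N₂ (le_max_right _ _) m (le_trans (le_max_right _ _) hm))
  -- matchings with the base configuration
  have he : ∀ m : ℕ, ∃ f : E d → E d, N₂ ≤ m →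
      Set.BijOn f ζ₀ (u m).1 ∧ ∀ x ∈ ζ₀, ‖x - f x‖ < δ₀ := by
    intro m
    by_cases hm : N₂ ≤ m
    · obtain ⟨-, f, hf, hsq⟩ := confDist_extract hζ₀ (u m).2 hδ₀1 (hbase m hm)
      exact ⟨f, fun _ => ⟨hf, fun x hx => lt_of_le_of_lt (disp_le hζ₀ hx) hsq⟩⟩
    · exact ⟨id, fun hc => absurd hc hm⟩
  set e : ℕ → E d → E d := fun m => Classical.choose (he m) with hedef
  have he1 : ∀ m, N₂ ≤ m → Set.BijOn (e m) ζ₀ (u m).1 :=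
    fun m hm => (Classical.choose_spec (he m) hm).1
  have he2 : ∀ m, N₂ ≤ m → ∀ x ∈ ζ₀, ‖x - e m x‖ < δ₀ :=
    fun m hm => (Classical.choose_spec (he m) hm).2
  -- Step 3: the matched points form Cauchy sequences
  have hkey : ∀ ε > (0:ℝ), ∃ N, N₂ ≤ N ∧ ∀ m ≥ N, ∀ k ≥ N, ∀ x ∈ ζ₀,
      ‖e m x - e k x‖ < ε := by
    intro ε hε
    set δ₁ : ℝ := min δ₀ ε with hδ₁def
    have hδ₁0 : 0 < δ₁ := lt_min hδ₀0 hε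
    have hδ₁δ₀ : δ₁ ≤ δ₀ := min_le_left _ _
    obtain ⟨N₃, hN₃⟩ := hu δ₁ hδ₁0
    refine ⟨max N₂ N₃, le_max_left _ _, ?_⟩
    intro m hm k hk x hx
    have hm₂ : N₂ ≤ m := le_trans (le_max_left _ _) hm
    have hk₂ : N₂ ≤ k := le_trans (le_max_left _ _) hk
    have hm₃ : N₃ ≤ m := le_trans (le_max_right _ _) hm
    have hk₃ : N₃ ≤ k := le_trans (le_max_right _ _) hk
    have hk₁ : N₁ ≤ k := le_trans (le_max_left _ _) hk₂
    have hcd : confDist (u m).1 (u k).1 < δ₁ :=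
      lt_of_le_of_lt (confDist_le_rho0 (u m) (u k)) (hN₃ m hm₃ k hk₃)
    obtain ⟨-, f, hf, hsq⟩ := confDist_extract (u m).2 (u k).2
      (le_trans hδ₁δ₀ hδ₀1) hcd
    have hfd : ∀ y ∈ (u m).1, ‖y - f y‖ < δ₁ :=
      fun y hy => lt_of_le_of_lt (disp_le (u m).2 hy) hsq
    have hxm : e m x ∈ (u m).1 := (he1 m hm₂).mapsTo hx
    have hxk : e k x ∈ (u k).1 := (he1 k hk₂).mapsTo hx
    have heqf : f (e m x) = e k x := by
      by_contra hne
      have hsep' := hsep k hk₁ (f (e m x)) (hf.mapsTo hxm) (e k x) hxk hne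
      have h1 : ‖e m x - f (e m x)‖ < δ₁ := hfd _ hxm
      have h2 : ‖x - e m x‖ < δ₀ := he2 m hm₂ x hx
      have h3 : ‖x - e k x‖ < δ₀ := he2 k hk₂ x hx
      have hsplit : f (e m x) - e k x =
          -(e m x - f (e m x)) + -(x - e m x) + (x - e k x) := by abel
      have hb : ‖f (e m x) - e k x‖ ≤
          ‖e m x - f (e m x)‖ + ‖x - e m x‖ + ‖x - e k x‖ := by
        calc ‖f (e m x) - e k x‖
            = ‖-(e m x - f (e m x)) + -(x - e m x) + (x - e k x)‖ := by rw [hsplit]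
          _ ≤ ‖-(e m x - f (e m x))‖ + ‖-(x - e m x)‖ + ‖x - e k x‖ := norm_add₃_le
          _ = _ := by rw [norm_neg, norm_neg]
      linarith
    calc ‖e m x - e k x‖ = ‖e m x - f (e m x)‖ := by rw [heqf]
      _ < δ₁ := hfd _ hxm
      _ ≤ ε := min_le_right _ _
  -- Step 4: limits of the matched points
  have hzex : ∀ x : E d, ∃ zx : E d, x ∈ ζ₀ →
      Tendsto (fun m => e m x) atTop (𝓝 zx) := by
    intro x
    by_cases hx : x ∈ ζ₀
    · have hcs : CauchySeq (fun m => e m x) := by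
        rw [Metric.cauchySeq_iff]
        intro ε hε
        obtain ⟨N, -, hN⟩ := hkey ε hε
        exact ⟨N, fun m hm k hk => by
          rw [dist_eq_norm]; exact hN m hm k hk x hx⟩
      obtain ⟨z, hz⟩ := cauchySeq_tendsto_of_complete hcs
      exact ⟨z, fun _ => hz⟩
    · exact ⟨x, fun hc => absurd hc hx⟩
  set z : E d → E d := fun x => Classical.choose (hzex x) with hzdef
  have hz : ∀ x ∈ ζ₀, Tendsto (fun m => e m x) atTop (𝓝 (z x)) :=
    fun x hx => Classical.choose_spec (hzex x) hx
  -- uniform convergence over the finite set ζ₀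
  have hzd : ∀ ε > (0:ℝ), ∃ N, N₂ ≤ N ∧ ∀ m ≥ N, ∀ x ∈ ζ₀, ‖e m x - z x‖ < ε := by
    intro ε hε
    have hex : ∀ x : E d, ∃ Nx : ℕ, x ∈ ζ₀ → ∀ m ≥ Nx, ‖e m x - z x‖ < ε := by
      intro x
      by_cases hx : x ∈ ζ₀
      · have ht := hz x hx
        rw [Metric.tendsto_atTop] at ht
        obtain ⟨N, hN⟩ := ht ε hε
        exact ⟨N, fun _ m hm => by rw [← dist_eq_norm]; exact hN m hm⟩
      · exact ⟨0, fun hc => absurd hc hx⟩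
    set Nf : E d → ℕ := fun x => Classical.choose (hex x) with hNfdef
    refine ⟨max N₂ (hζ₀.toFinset.sup Nf), le_max_left _ _, ?_⟩
    intro m hm x hx
    have h1 : Nf x ≤ hζ₀.toFinset.sup Nf := Finset.le_sup (hζ₀.mem_toFinset.2 hx)
    have h2 : hζ₀.toFinset.sup Nf ≤ m := le_trans (le_max_right N₂ _) hm
    exact Classical.choose_spec (hex x) hx m (le_trans h1 h2)
  -- z is injective on ζ₀
  have hinjz : Set.InjOn z ζ₀ := by
    intro x hx x' hx' hzz
    by_contra hne
    obtain ⟨N, hNN₂, hN⟩ := hzd (c/4) (by positivity)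
    have hm₂ : N₂ ≤ N := hNN₂
    have hm₁ : N₁ ≤ N := le_trans (le_max_left _ _) hm₂
    have hxm : e N x ∈ (u N).1 := (he1 N hm₂).mapsTo hx
    have hxm' : e N x' ∈ (u N).1 := (he1 N hm₂).mapsTo hx'
    have hnexx : e N x ≠ e N x' := fun hc => hne ((he1 N hm₂).injOn hx hx' hc)
    have hsep' := hsep N hm₁ (e N x) hxm (e N x') hxm' hnexx
    have h1 : ‖e N x - z x‖ < c/4 := hN N (le_refl _) x hx
    have h2 : ‖e N x' - z x'‖ < c/4 := hN N (le_refl _) x' hx'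
    have hsplit : e N x - e N x' = (e N x - z x) + -(e N x' - z x') := by
      rw [hzz]; abel
    have hb : ‖e N x - e N x'‖ ≤ ‖e N x - z x‖ + ‖e N x' - z x'‖ := by
      calc ‖e N x - e N x'‖ = ‖(e N x - z x) + -(e N x' - z x')‖ := by rw [hsplit]
        _ ≤ ‖e N x - z x‖ + ‖-(e N x' - z x')‖ := norm_add_le _ _
        _ = _ := by rw [norm_neg]
    linarith
  -- the limit configuration
  refine ⟨⟨z '' ζ₀, hζ₀.image z⟩, ?_⟩
  apply tendsto_rho0_of_confDist
  intro ε hε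
  set n : ℕ := ζ₀.ncard with hndef
  set ε' : ℝ := ε / (2 * ((n:ℝ) + 1)) with hε'def
  have hε'0 : 0 < ε' := by positivity
  obtain ⟨N, hNN₂, hN⟩ := hzd ε' hε'0
  refine ⟨N, fun m hm => ?_⟩
  have hm₂ : N₂ ≤ m := le_trans hNN₂ hm
  have hbm := he1 m hm₂
  have hinv : Set.InvOn (Function.invFunOn (e m) ζ₀) (e m) ζ₀ (u m).1 :=
    hbm.invOn_invFunOn
  have hbij_inv : Set.BijOn (Function.invFunOn (e m) ζ₀) (u m).1 ζ₀ :=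
    Set.BijOn.symm hinv.symm hbm
  have hbijw : Set.BijOn (fun y => z (Function.invFunOn (e m) ζ₀ y))
      (u m).1 (z '' ζ₀) := (hinjz.bijOn_image).comp hbij_inv
  apply confDist_lt_of_disp (u m).2 hbijw hε'0.le
  · intro y hy
    obtain ⟨x, hx, rfl⟩ := hbm.surjOn hy
    have hinvx : Function.invFunOn (e m) ζ₀ (e m x) = x := hinv.1 hx
    show ‖e m x - z (Function.invFunOn (e m) ζ₀ (e m x))‖ ≤ ε'
    rw [hinvx]
    exact (hN m hm x hx).le
  · have hcard : (u m).1.ncard = n := by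
      rw [hndef, ← hbm.image_eq, Set.ncard_image_of_injOn hbm.injOn]
    rw [hcard, hε'def]
    have hn1 : (0:ℝ) < (n:ℝ) + 1 := by positivity
    calc ((n:ℝ) + 1) * (ε / (2 * ((n:ℝ) + 1))) = ε/2 := by field_simp
      _ < ε := by linarith

end Complete


/-- `(Γ₀(ℝ^d), dist)` is a Polish space: it is separable, and there is a complete metric `ρ`
on `Γ₀(ℝ^d)` inducing the same topology as `dist`. -/
theorem gamma0_polish (d : ℕ) (hd : 1 ≤ d) :
    (∃ D : Set (Gamma0 d), D.Countable ∧
      ∀ ζ : Gamma0 d, ∀ ε > (0 : ℝ), ∃ η ∈ D, confDist ζ.1 η.1 < ε) ∧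
    ∃ ρ : Gamma0 d → Gamma0 d → ℝ,
      (∀ ζ η, 0 ≤ ρ ζ η) ∧
      (∀ ζ η, ρ ζ η = 0 ↔ ζ = η) ∧
      (∀ ζ η, ρ ζ η = ρ η ζ) ∧
      (∀ ζ ξ η, ρ ζ η ≤ ρ ζ ξ + ρ ξ η) ∧
      -- `ρ` induces the same topology as `dist`:
      (∀ ζ : Gamma0 d, ∀ ε > (0 : ℝ), ∃ δ > (0 : ℝ),
        ∀ η : Gamma0 d, confDist ζ.1 η.1 < δ → ρ ζ η < ε) ∧
      (∀ ζ : Gamma0 d, ∀ ε > (0 : ℝ), ∃ δ > (0 : ℝ),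
        ∀ η : Gamma0 d, ρ ζ η < δ → confDist ζ.1 η.1 < ε) ∧
      -- `ρ` is complete:
      (∀ u : ℕ → Gamma0 d,
        (∀ ε > (0 : ℝ), ∃ N : ℕ, ∀ m ≥ N, ∀ k ≥ N, ρ (u m) (u k) < ε) →
        ∃ l : Gamma0 d, Tendsto (fun m => ρ (u m) l) atTop (𝓝 0)) := by
  constructor
  · exact gamma0_separable
  · refine ⟨rho0, rho0_nonneg, rho0_eq_zero, rho0_comm, rho0_triangle, ?_, ?_, ?_⟩
    · intro ζ ε hε
      exact rho0_cont ζ hε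
    · intro ζ ε hε
      exact ⟨ε, hε, fun η h => lt_of_le_of_lt (confDist_le_rho0 ζ η) h⟩
    · intro u hu
      exact gamma0_complete u hu

end
end
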